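/- arXiv:2508.02471 — 7 statements merged into one kernel-verified Lean document; each statement's English description precedes it below -/
import Mathlib

section
/- Let F, G, T be positive integers, let A ∈ ℂ^{T×F} be a matrix whose first row has all entries equal to 1, let r̂ ∈ ℂ^T, let C ∈ ℝ^{F×G} have nonnegative entries, and let β, ζ, η > 0. For ε ≥ 0 define J_ε(M) = (1/T)·‖r̂ − A(M·1_G)‖₂² + β·1_Fᵀ M 1_G + ζ·(⟨C, M⟩ + ε·D(M) + η·‖M‖_{∞,1}) for M ∈ ℝ^{F×G} with nonnegative entries. Let (ε_p)_p be a sequence of positive reals with ε_p → 0, and for each p let M_p be a minimizer of J_{ε_p} over the nonnegative matrices. Then the sequence (M_p)_p has a limit point M⋆, every such limit point minimizes J_0 over the nonnegative matrices, and M⋆ is the unique element of argmin J_0 with minimal value of D (the maximum-entropy minimizer); consequently ν⋆ = M⋆·1_G satisfies ν⋆ = M⋆ 1_G for this unique maximum-entropy solution M⋆. -/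
open scoped BigOperators
open Filter

/-- Entropy term `D(M) = Σ_{f,g} (M_{f,g} log M_{f,g} − M_{f,g} + 1)`
(with the convention `0·log 0 = 0`, which holds since `Real.log 0 = 0`). -/
noncomputable def entD {F G : ℕ} (M : Matrix (Fin F) (Fin G) ℝ) : ℝ :=
  ∑ f, ∑ g, (M f g * Real.log (M f g) - M f g + 1)

/-- Mixed norm `‖M‖_{∞,1} = Σ_g max_f |M_{f,g}|`. -/
noncomputable def mixedInfOne {F G : ℕ} (M : Matrix (Fin F) (Fin G) ℝ) : ℝ :=
  ∑ g, ⨆ f, |M f g|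

/-- Frobenius inner product `⟨C, M⟩ = Σ_{f,g} C_{f,g} M_{f,g}`. -/
def frob {F G : ℕ} (C M : Matrix (Fin F) (Fin G) ℝ) : ℝ :=
  ∑ f, ∑ g, C f g * M f g

lemma ent_term_nonneg {x : ℝ} (hx : 0 ≤ x) : 0 ≤ x * Real.log x - x + 1 := by
  rcases eq_or_lt_of_le hx with h | h
  · simp [← h]
  · have h1 := Real.log_le_sub_one_of_pos (inv_pos.mpr h)
    rw [Real.log_inv] at h1
    have h2 : x * x⁻¹ = 1 := mul_inv_cancel₀ h.ne'
    nlinarith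

lemma mul_log_mid_le {a b : ℝ} (ha : 0 ≤ a) (hb : 0 ≤ b) :
    ((a + b) / 2) * Real.log ((a + b) / 2)
      ≤ (a * Real.log a + b * Real.log b) / 2 := by
  have h := Real.strictConvexOn_mul_log.convexOn.2 (Set.mem_Ici.mpr ha) (Set.mem_Ici.mpr hb)
    (by norm_num : (0:ℝ) ≤ 1/2) (by norm_num : (0:ℝ) ≤ 1/2) (by norm_num)
  simp only [smul_eq_mul] at h
  have e : (a + b) / 2 = 1/2 * a + 1/2 * b := by ring
  rw [e]; linarith

lemma mul_log_mid_lt {a b : ℝ} (ha : 0 ≤ a) (hb : 0 ≤ b) (hne : a ≠ b) :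
    ((a + b) / 2) * Real.log ((a + b) / 2)
      < (a * Real.log a + b * Real.log b) / 2 := by
  have h := Real.strictConvexOn_mul_log.2 (Set.mem_Ici.mpr ha) (Set.mem_Ici.mpr hb) hne
    (by norm_num : (0:ℝ) < 1/2) (by norm_num : (0:ℝ) < 1/2) (by norm_num)
  simp only [smul_eq_mul] at h
  have e : (a + b) / 2 = 1/2 * a + 1/2 * b := by ring
  rw [e]; linarith

lemma normSq_mid_le (x y : ℂ) :
    Complex.normSq ((x + y) / 2) ≤ (Complex.normSq x + Complex.normSq y) / 2 := by
  have h4 : Complex.normSq ((x + y) / 2) = Complex.normSq (x + y) / 4 := by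
    rw [map_div₀]; norm_num [Complex.normSq_apply]
  rw [h4]
  simp only [Complex.normSq_apply, Complex.add_re, Complex.add_im]
  nlinarith [sq_nonneg (x.re - y.re), sq_nonneg (x.im - y.im)]

/-- maximum-entropy limit of the entropically regularized
multi-pitch objective as ε → 0. -/
theorem stmt0 (F G T : ℕ) (hF : 0 < F) (hG : 0 < G) (hT : 0 < T)
    (A : Matrix (Fin T) (Fin F) ℂ)
    (hA : ∀ f, A ⟨0, hT⟩ f = 1)
    (r : Fin T → ℂ)
    (C : Matrix (Fin F) (Fin G) ℝ) (hC : ∀ f g, 0 ≤ C f g)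
    (β ζ η : ℝ) (hβ : 0 < β) (hζ : 0 < ζ) (hη : 0 < η)
    (J : ℝ → Matrix (Fin F) (Fin G) ℝ → ℝ)
    (hJ : ∀ ε M, J ε M =
      (1 / (T : ℝ)) * ∑ t, Complex.normSq (r t - ∑ f, A t f * ((∑ g, M f g : ℝ) : ℂ))
      + β * (∑ f, ∑ g, M f g)
      + ζ * (frob C M + ε * entD M + η * mixedInfOne M))
    (εs : ℕ → ℝ) (hεpos : ∀ p, 0 < εs p)
    (hεlim : Filter.Tendsto εs Filter.atTop (nhds 0))
    (Ms : ℕ → Matrix (Fin F) (Fin G) ℝ)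
    (hMnn : ∀ p, ∀ f g, 0 ≤ Ms p f g)
    (hMmin : ∀ p, ∀ M : Matrix (Fin F) (Fin G) ℝ,
      (∀ f g, 0 ≤ M f g) → J (εs p) (Ms p) ≤ J (εs p) M) :
    ∃ Mstar : Matrix (Fin F) (Fin G) ℝ,
      -- the sequence has a limit point M⋆
      (∃ φ : ℕ → ℕ, StrictMono φ ∧
        Filter.Tendsto (fun p => Ms (φ p)) Filter.atTop (nhds Mstar)) ∧
      -- every limit point minimizes J₀ over the nonnegative matrices, minimizes D
      -- among all such minimizers, and (by uniqueness of the maximum-entropy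
      -- minimizer) equals M⋆
      (∀ N : Matrix (Fin F) (Fin G) ℝ,
        (∃ φ : ℕ → ℕ, StrictMono φ ∧
          Filter.Tendsto (fun p => Ms (φ p)) Filter.atTop (nhds N)) →
        (∀ f g, 0 ≤ N f g) ∧
        (∀ M : Matrix (Fin F) (Fin G) ℝ, (∀ f g, 0 ≤ M f g) → J 0 N ≤ J 0 M) ∧
        (∀ M : Matrix (Fin F) (Fin G) ℝ, (∀ f g, 0 ≤ M f g) →
          (∀ M' : Matrix (Fin F) (Fin G) ℝ, (∀ f g, 0 ≤ M' f g) → J 0 M ≤ J 0 M') →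
          entD N ≤ entD M) ∧
        N = Mstar) ∧
      -- M⋆ is the unique minimizer of J₀ with minimal entropy term D
      (∀ f g, 0 ≤ Mstar f g) ∧
      (∀ M : Matrix (Fin F) (Fin G) ℝ, (∀ f g, 0 ≤ M f g) → J 0 Mstar ≤ J 0 M) ∧
      (∀ M : Matrix (Fin F) (Fin G) ℝ, (∀ f g, 0 ≤ M f g) →
        (∀ M' : Matrix (Fin F) (Fin G) ℝ, (∀ f g, 0 ≤ M' f g) → J 0 M ≤ J 0 M') →
        entD Mstar ≤ entD M) ∧
      (∀ M : Matrix (Fin F) (Fin G) ℝ, (∀ f g, 0 ≤ M f g) →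
        (∀ M' : Matrix (Fin F) (Fin G) ℝ, (∀ f g, 0 ≤ M' f g) → J 0 M ≤ J 0 M') →
        (∀ M' : Matrix (Fin F) (Fin G) ℝ, (∀ f g, 0 ≤ M' f g) →
          (∀ M'' : Matrix (Fin F) (Fin G) ℝ, (∀ f g, 0 ≤ M'' f g) → J 0 M' ≤ J 0 M'') →
          entD M ≤ entD M') →
        M = Mstar) := by
  classical
  haveI : Nonempty (Fin F) := ⟨⟨0, hF⟩⟩
  haveI : Nonempty (Fin G) := ⟨⟨0, hG⟩⟩
  -- basic nonnegativity facts
  have hbdd : ∀ (M : Matrix (Fin F) (Fin G) ℝ) (g : Fin G),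
      BddAbove (Set.range fun f => |M f g|) := fun M g =>
    (Set.finite_range _).bddAbove
  have hent_nn : ∀ (M : Matrix (Fin F) (Fin G) ℝ), (∀ f g, 0 ≤ M f g) → 0 ≤ entD M := by
    intro M hM
    exact Finset.sum_nonneg fun f _ => Finset.sum_nonneg fun g _ => ent_term_nonneg (hM f g)
  have hfrob_nn : ∀ (M : Matrix (Fin F) (Fin G) ℝ), (∀ f g, 0 ≤ M f g) → 0 ≤ frob C M := by
    intro M hM
    exact Finset.sum_nonneg fun f _ => Finset.sum_nonneg fun g _ =>
      mul_nonneg (hC f g) (hM f g)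
  have hmix_nn : ∀ (M : Matrix (Fin F) (Fin G) ℝ), 0 ≤ mixedInfOne M := by
    intro M
    refine Finset.sum_nonneg fun g _ => ?_
    exact le_trans (abs_nonneg (M (Classical.arbitrary _) g))
      (le_ciSup (hbdd M g) (Classical.arbitrary _))
  have hres_nn : ∀ (M : Matrix (Fin F) (Fin G) ℝ),
      0 ≤ (1 / (T : ℝ)) * ∑ t, Complex.normSq (r t - ∑ f, A t f * ((∑ g, M f g : ℝ) : ℂ)) := by
    intro M
    exact mul_nonneg (by positivity) (Finset.sum_nonneg fun t _ => Complex.normSq_nonneg _)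
  have hsum_nn : ∀ (M : Matrix (Fin F) (Fin G) ℝ), (∀ f g, 0 ≤ M f g) →
      0 ≤ ∑ f, ∑ g, M f g := fun M hM =>
    Finset.sum_nonneg fun f _ => Finset.sum_nonneg fun g _ => hM f g
  -- splitting of J
  have hsplit : ∀ ε (M : Matrix (Fin F) (Fin G) ℝ), J ε M = J 0 M + ζ * ε * entD M := by
    intro ε M; rw [hJ, hJ]; ring
  have hJ0' : ∀ (M : Matrix (Fin F) (Fin G) ℝ), J 0 M =
      (1 / (T : ℝ)) * ∑ t, Complex.normSq (r t - ∑ f, A t f * ((∑ g, M f g : ℝ) : ℂ))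
      + β * (∑ f, ∑ g, M f g) + ζ * (frob C M + η * mixedInfOne M) := by
    intro M; rw [hJ]; ring
  -- uniform bound on J values
  obtain ⟨E, hE⟩ : ∃ E, ∀ p, εs p ≤ E := by
    obtain ⟨E, hE⟩ := hεlim.bddAbove_range
    exact ⟨E, fun p => hE (Set.mem_range_self p)⟩
  have hzero_nn : ∀ f g, (0 : ℝ) ≤ (0 : Matrix (Fin F) (Fin G) ℝ) f g := by
    intro f g; simp
  have hzero_val : ∀ ε, J ε (0 : Matrix (Fin F) (Fin G) ℝ)
      = (1 / (T : ℝ)) * ∑ t, Complex.normSq (r t) + ζ * (ε * (F * G : ℝ)) := by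
    intro ε
    rw [hJ]
    have h1 : entD (0 : Matrix (Fin F) (Fin G) ℝ) = (F * G : ℝ) := by
      simp [entD, Finset.sum_const]
    have h2 : mixedInfOne (0 : Matrix (Fin F) (Fin G) ℝ) = 0 := by
      simp [mixedInfOne, ciSup_const]
    have h3 : frob C (0 : Matrix (Fin F) (Fin G) ℝ) = 0 := by
      simp [frob]
    rw [h1, h2, h3]
    simp
  set K0 : ℝ := (1 / (T : ℝ)) * ∑ t, Complex.normSq (r t) + ζ * (E * (F * G : ℝ)) with hK0
  have hub : ∀ p, J (εs p) (Ms p) ≤ K0 := by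
    intro p
    refine le_trans (hMmin p 0 hzero_nn) ?_
    rw [hzero_val]
    have : εs p * (F * G : ℝ) ≤ E * (F * G : ℝ) :=
      mul_le_mul_of_nonneg_right (hE p) (by positivity)
    nlinarith [hζ.le]
  have hentry_bd : ∀ p f g, Ms p f g ≤ K0 / β := by
    intro p f g
    have h1 : β * (∑ f, ∑ g, Ms p f g) ≤ J (εs p) (Ms p) := by
      rw [hJ]
      have := hres_nn (Ms p)
      have h2 : 0 ≤ frob C (Ms p) + εs p * entD (Ms p) + η * mixedInfOne (Ms p) := by
        have := hfrob_nn (Ms p) (hMnn p)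
        have := hent_nn (Ms p) (hMnn p)
        have := hmix_nn (Ms p)
        have := (hεpos p).le
        nlinarith [hη.le]
      nlinarith [hζ.le]
    have h3 : Ms p f g ≤ ∑ f, ∑ g, Ms p f g := by
      calc Ms p f g ≤ ∑ g, Ms p f g :=
            Finset.single_le_sum (fun g _ => hMnn p f g) (Finset.mem_univ g)
        _ ≤ ∑ f, ∑ g, Ms p f g :=
            Finset.single_le_sum (f := fun f => ∑ g, Ms p f g)
              (fun f _ => Finset.sum_nonneg fun g _ => hMnn p f g) (Finset.mem_univ f)
    rw [le_div_iff₀ hβ]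
    calc Ms p f g * β = β * Ms p f g := by ring
    _ ≤ β * (∑ f, ∑ g, Ms p f g) := by
        exact mul_le_mul_of_nonneg_left h3 hβ.le
    _ ≤ K0 := le_trans h1 (hub p)
  -- Bolzano–Weierstrass
  set R : ℝ := max (K0 / β) 0 with hR
  have hxmem : ∀ p, (fun f g => Ms p f g) ∈ Metric.closedBall (0 : Fin F → Fin G → ℝ) R := by
    intro p
    rw [Metric.mem_closedBall, dist_zero_right]
    refine (pi_norm_le_iff_of_nonneg (le_max_right _ _)).mpr fun f => ?_
    refine (pi_norm_le_iff_of_nonneg (le_max_right _ _)).mpr fun g => ?_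
    rw [Real.norm_eq_abs, abs_of_nonneg (hMnn p f g)]
    exact le_trans (hentry_bd p f g) (le_max_left _ _)
  obtain ⟨a, -, φ0, hφ0, hconv0⟩ :=
    tendsto_subseq_of_bounded Metric.isBounded_closedBall hxmem
  have haconv : ∀ f g, Tendsto (fun p => Ms (φ0 p) f g) atTop (nhds (a f g)) := by
    intro f g
    have h1 := tendsto_pi_nhds.mp hconv0 f
    exact tendsto_pi_nhds.mp h1 g
  -- continuity along subsequences
  have htends : ∀ (N : Matrix (Fin F) (Fin G) ℝ) (ψ : ℕ → ℕ),
      (∀ f g, Tendsto (fun p => Ms (ψ p) f g) atTop (nhds (N f g))) →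
      Tendsto (fun p => J 0 (Ms (ψ p))) atTop (nhds (J 0 N)) ∧
      Tendsto (fun p => entD (Ms (ψ p))) atTop (nhds (entD N)) := by
    intro N ψ htd
    have hsum : ∀ f, Tendsto (fun p => ∑ g, Ms (ψ p) f g) atTop (nhds (∑ g, N f g)) :=
      fun f => tendsto_finset_sum _ fun g _ => htd f g
    have hres : Tendsto (fun p => ∑ t, Complex.normSq
        (r t - ∑ f, A t f * ((∑ g, Ms (ψ p) f g : ℝ) : ℂ))) atTop
        (nhds (∑ t, Complex.normSq (r t - ∑ f, A t f * ((∑ g, N f g : ℝ) : ℂ)))) := by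
      refine tendsto_finset_sum _ fun t _ => ?_
      refine (Complex.continuous_normSq.tendsto _).comp ?_
      refine Filter.Tendsto.const_sub _ ?_
      refine tendsto_finset_sum _ fun f _ => ?_
      exact Filter.Tendsto.const_mul _ ((Complex.continuous_ofReal.tendsto _).comp (hsum f))
    have hsum2 : Tendsto (fun p => ∑ f, ∑ g, Ms (ψ p) f g) atTop
        (nhds (∑ f, ∑ g, N f g)) := tendsto_finset_sum _ fun f _ => hsum f
    have hfrobt : Tendsto (fun p => frob C (Ms (ψ p))) atTop (nhds (frob C N)) := by
      simp only [frob]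
      exact tendsto_finset_sum _ fun f _ => tendsto_finset_sum _ fun g _ =>
        Filter.Tendsto.const_mul _ (htd f g)
    have hentt : Tendsto (fun p => entD (Ms (ψ p))) atTop (nhds (entD N)) := by
      simp only [entD]
      refine tendsto_finset_sum _ fun f _ => tendsto_finset_sum _ fun g _ => ?_
      exact Filter.Tendsto.add_const _
        ((((Real.continuous_mul_log.tendsto _).comp (htd f g))).sub (htd f g))
    have hmixt : Tendsto (fun p => mixedInfOne (Ms (ψ p))) atTop (nhds (mixedInfOne N)) := by
      simp only [mixedInfOne]
      refine tendsto_finset_sum _ fun g _ => ?_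
      have h1 : ∀ p, (⨆ f, |Ms (ψ p) f g|) =
          Finset.univ.sup' Finset.univ_nonempty (fun f => |Ms (ψ p) f g|) :=
        fun p => (Finset.sup'_univ_eq_ciSup _).symm
      rw [show (⨆ f, |N f g|) =
          Finset.univ.sup' Finset.univ_nonempty (fun f => |N f g|) from
        (Finset.sup'_univ_eq_ciSup _).symm]
      simp only [h1]
      exact Filter.Tendsto.finset_sup'_nhds_apply _ fun f _ =>
        (continuous_abs.tendsto _).comp (htd f g)
    constructor
    · have hEq : (fun p => J 0 (Ms (ψ p))) = fun p =>
        (1 / (T : ℝ)) * ∑ t, Complex.normSq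
          (r t - ∑ f, A t f * ((∑ g, Ms (ψ p) f g : ℝ) : ℂ))
        + β * (∑ f, ∑ g, Ms (ψ p) f g)
        + ζ * (frob C (Ms (ψ p)) + η * mixedInfOne (Ms (ψ p))) :=
        funext fun p => hJ0' _
      rw [hEq, hJ0' N]
      exact ((hres.const_mul _).add (hsum2.const_mul _)).add
        ((hfrobt.add (hmixt.const_mul _)).const_mul _)
    · exact hentt
  -- every entrywise limit point along a strictly monotone subsequence is a
  -- maximum-entropy minimizer
  have hprop : ∀ (N : Matrix (Fin F) (Fin G) ℝ) (ψ : ℕ → ℕ), StrictMono ψ →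
      (∀ f g, Tendsto (fun p => Ms (ψ p) f g) atTop (nhds (N f g))) →
      (∀ f g, 0 ≤ N f g) ∧
      (∀ M : Matrix (Fin F) (Fin G) ℝ, (∀ f g, 0 ≤ M f g) → J 0 N ≤ J 0 M) ∧
      (∀ M : Matrix (Fin F) (Fin G) ℝ, (∀ f g, 0 ≤ M f g) →
        (∀ M' : Matrix (Fin F) (Fin G) ℝ, (∀ f g, 0 ≤ M' f g) → J 0 M ≤ J 0 M') →
        entD N ≤ entD M) := by
    intro N ψ hψ htd
    obtain ⟨hJt, hEt⟩ := htends N ψ htd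
    have hNnn : ∀ f g, 0 ≤ N f g := fun f g => ge_of_tendsto' (htd f g) fun p => hMnn _ f g
    refine ⟨hNnn, ?_, ?_⟩
    · intro M hM
      have h1 : ∀ p, J 0 (Ms (ψ p)) ≤ J 0 M + ζ * εs (ψ p) * entD M := by
        intro p
        have h2 : J 0 (Ms (ψ p)) ≤ J (εs (ψ p)) (Ms (ψ p)) := by
          rw [hsplit (εs (ψ p)) (Ms (ψ p))]
          have := mul_nonneg (mul_nonneg hζ.le (hεpos (ψ p)).le)
            (hent_nn _ (hMnn (ψ p)))
          linarith
        calc J 0 (Ms (ψ p)) ≤ J (εs (ψ p)) (Ms (ψ p)) := h2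
          _ ≤ J (εs (ψ p)) M := hMmin (ψ p) M hM
          _ = J 0 M + ζ * εs (ψ p) * entD M := hsplit _ _
      have hRHS : Tendsto (fun p => J 0 M + ζ * εs (ψ p) * entD M) atTop
          (nhds (J 0 M)) := by
        have h3 := ((hεlim.comp hψ.tendsto_atTop).const_mul ζ).mul_const (entD M)
        simpa using tendsto_const_nhds.add h3
      exact le_of_tendsto_of_tendsto' hJt hRHS h1
    · intro M hM hMm
      have h1 : ∀ p, entD (Ms (ψ p)) ≤ entD M := by
        intro p
        have h2 := hMmin (ψ p) M hM
        rw [hsplit (εs (ψ p)) (Ms (ψ p)), hsplit (εs (ψ p)) M] at h2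
        have h3 := hMm (Ms (ψ p)) (hMnn (ψ p))
        have h4 := hεpos (ψ p)
        have h5 : ζ * εs (ψ p) * entD (Ms (ψ p)) ≤ ζ * εs (ψ p) * entD M := by linarith
        exact (mul_le_mul_iff_right₀ (mul_pos hζ h4)).mp h5
      exact le_of_tendsto' hEt h1
  -- midpoint convexity of J 0
  have hJ0conv : ∀ (M M' : Matrix (Fin F) (Fin G) ℝ),
      (∀ f g, 0 ≤ M f g) → (∀ f g, 0 ≤ M' f g) →
      J 0 (Matrix.of fun f g => (M f g + M' f g) / 2) ≤ (J 0 M + J 0 M') / 2 := by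
    intro M M' hM hM'
    have hPa : ∀ f g, (Matrix.of fun f g => (M f g + M' f g) / 2) f g
        = (M f g + M' f g) / 2 := fun f g => rfl
    have hsumP : ∀ f, (∑ g, (Matrix.of fun f g => (M f g + M' f g) / 2) f g)
        = ((∑ g, M f g) + (∑ g, M' f g)) / 2 := by
      intro f
      simp only [hPa]
      rw [← Finset.sum_add_distrib, Finset.sum_div]
    have ecast : ∀ x y : ℝ, (((x + y) / 2 : ℝ) : ℂ) = ((x : ℂ) + (y : ℂ)) / 2 := by
      intro x y; push_cast; ring
    have e0 : ∀ (t : Fin T) (u v : Fin F → ℂ),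
        ∑ f, A t f * ((u f + v f) / 2)
          = ((∑ f, A t f * u f) + ∑ f, A t f * v f) / 2 := by
      intro t u v
      rw [← Finset.sum_add_distrib, Finset.sum_div]
      exact Finset.sum_congr rfl fun f _ => by ring
    have hres : ∀ t, Complex.normSq (r t - ∑ f, A t f *
          ((∑ g, (Matrix.of fun f g => (M f g + M' f g) / 2) f g : ℝ) : ℂ))
        ≤ (Complex.normSq (r t - ∑ f, A t f * ((∑ g, M f g : ℝ) : ℂ))
          + Complex.normSq (r t - ∑ f, A t f * ((∑ g, M' f g : ℝ) : ℂ))) / 2 := by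
      intro t
      have e1 : (r t - ∑ f, A t f *
            ((∑ g, (Matrix.of fun f g => (M f g + M' f g) / 2) f g : ℝ) : ℂ))
          = ((r t - ∑ f, A t f * ((∑ g, M f g : ℝ) : ℂ))
            + (r t - ∑ f, A t f * ((∑ g, M' f g : ℝ) : ℂ))) / 2 := by
        simp only [hsumP, ecast]
        rw [e0 t (fun f => ((∑ g, M f g : ℝ) : ℂ)) (fun f => ((∑ g, M' f g : ℝ) : ℂ))]
        ring
      rw [e1]
      exact normSq_mid_le _ _
    have hfrobP : frob C (Matrix.of fun f g => (M f g + M' f g) / 2)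
        = (frob C M + frob C M') / 2 := by
      simp only [frob, hPa]
      have h1 : ∀ f, ∑ g, C f g * ((M f g + M' f g) / 2)
          = ((∑ g, C f g * M f g) + ∑ g, C f g * M' f g) / 2 := by
        intro f
        rw [← Finset.sum_add_distrib, Finset.sum_div]
        exact Finset.sum_congr rfl fun g _ => by ring
      simp only [h1]
      rw [← Finset.sum_add_distrib, Finset.sum_div]
    have hsumsumP : (∑ f, ∑ g, (Matrix.of fun f g => (M f g + M' f g) / 2) f g)
        = ((∑ f, ∑ g, M f g) + ∑ f, ∑ g, M' f g) / 2 := by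
      simp only [hsumP]
      rw [← Finset.sum_add_distrib, Finset.sum_div]
    have hmixP : mixedInfOne (Matrix.of fun f g => (M f g + M' f g) / 2)
        ≤ (mixedInfOne M + mixedInfOne M') / 2 := by
      simp only [mixedInfOne]
      rw [show ((∑ g, ⨆ f, |M f g|) + ∑ g, ⨆ f, |M' f g|) / 2
          = ∑ g, ((⨆ f, |M f g|) + (⨆ f, |M' f g|)) / 2 by
        rw [← Finset.sum_add_distrib, Finset.sum_div]]
      refine Finset.sum_le_sum fun g _ => ?_
      refine ciSup_le fun f => ?_
      have h1 : |(Matrix.of fun f g => (M f g + M' f g) / 2) f g|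
          ≤ (|M f g| + |M' f g|) / 2 := by
        rw [hPa, abs_div]
        have := abs_add_le (M f g) (M' f g)
        have h2 : |(2:ℝ)| = 2 := by norm_num
        rw [h2]
        linarith
      have h2 : |M f g| ≤ ⨆ f', |M f' g| := le_ciSup (hbdd M g) f
      have h3 : |M' f g| ≤ ⨆ f', |M' f' g| := le_ciSup (hbdd M' g) f
      linarith
    rw [hJ0' _, hJ0' M, hJ0' M']
    have hres_sum : (∑ t, Complex.normSq (r t - ∑ f, A t f *
          ((∑ g, (Matrix.of fun f g => (M f g + M' f g) / 2) f g : ℝ) : ℂ)))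
        ≤ ((∑ t, Complex.normSq (r t - ∑ f, A t f * ((∑ g, M f g : ℝ) : ℂ)))
          + ∑ t, Complex.normSq (r t - ∑ f, A t f * ((∑ g, M' f g : ℝ) : ℂ))) / 2 := by
      calc (∑ t, Complex.normSq (r t - ∑ f, A t f *
            ((∑ g, (Matrix.of fun f g => (M f g + M' f g) / 2) f g : ℝ) : ℂ)))
          ≤ ∑ t, (Complex.normSq (r t - ∑ f, A t f * ((∑ g, M f g : ℝ) : ℂ))
            + Complex.normSq (r t - ∑ f, A t f * ((∑ g, M' f g : ℝ) : ℂ))) / 2 :=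
            Finset.sum_le_sum fun t _ => hres t
        _ = ((∑ t, Complex.normSq (r t - ∑ f, A t f * ((∑ g, M f g : ℝ) : ℂ)))
            + ∑ t, Complex.normSq (r t - ∑ f, A t f * ((∑ g, M' f g : ℝ) : ℂ))) / 2 := by
            rw [← Finset.sum_add_distrib, Finset.sum_div]
    have t1 : (1 / (T : ℝ)) * (∑ t, Complex.normSq (r t - ∑ f, A t f *
          ((∑ g, (Matrix.of fun f g => (M f g + M' f g) / 2) f g : ℝ) : ℂ)))
        ≤ (1 / (T : ℝ)) * (((∑ t, Complex.normSq (r t - ∑ f, A t f * ((∑ g, M f g : ℝ) : ℂ)))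
          + ∑ t, Complex.normSq (r t - ∑ f, A t f * ((∑ g, M' f g : ℝ) : ℂ))) / 2) :=
      mul_le_mul_of_nonneg_left hres_sum (by positivity)
    have t2 : ζ * (frob C (Matrix.of fun f g => (M f g + M' f g) / 2)
          + η * mixedInfOne (Matrix.of fun f g => (M f g + M' f g) / 2))
        ≤ ζ * ((frob C M + frob C M') / 2
          + η * ((mixedInfOne M + mixedInfOne M') / 2)) := by
      refine mul_le_mul_of_nonneg_left ?_ hζ.le
      rw [hfrobP]
      exact add_le_add le_rfl (mul_le_mul_of_nonneg_left hmixP hη.le)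
    rw [hsumsumP]
    linarith
  -- strict midpoint convexity of entD
  have hentconv : ∀ (M M' : Matrix (Fin F) (Fin G) ℝ), (∀ f g, 0 ≤ M f g) →
      (∀ f g, 0 ≤ M' f g) → M ≠ M' →
      entD (Matrix.of fun f g => (M f g + M' f g) / 2) < (entD M + entD M') / 2 := by
    intro M M' hM hM' hne
    obtain ⟨f0, g0, hfg⟩ : ∃ f g, M f g ≠ M' f g := by
      by_contra h
      push_neg at h
      exact hne (by ext f g; exact h f g)
    have key : ∀ a b : ℝ, 0 ≤ a → 0 ≤ b →
        ((a + b) / 2) * Real.log ((a + b) / 2) - (a + b) / 2 + 1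
          ≤ ((a * Real.log a - a + 1) + (b * Real.log b - b + 1)) / 2 := by
      intro a b ha hb; have := mul_log_mid_le ha hb; linarith
    have keylt : ∀ a b : ℝ, 0 ≤ a → 0 ≤ b → a ≠ b →
        ((a + b) / 2) * Real.log ((a + b) / 2) - (a + b) / 2 + 1
          < ((a * Real.log a - a + 1) + (b * Real.log b - b + 1)) / 2 := by
      intro a b ha hb hab; have := mul_log_mid_lt ha hb hab; linarith
    have hrhs : (entD M + entD M') / 2 = ∑ f, ∑ g,
        ((M f g * Real.log (M f g) - M f g + 1)
          + (M' f g * Real.log (M' f g) - M' f g + 1)) / 2 := by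
      simp only [entD]
      rw [← Finset.sum_add_distrib, Finset.sum_div]
      exact Finset.sum_congr rfl fun f _ => by
        rw [← Finset.sum_add_distrib, Finset.sum_div]
    rw [hrhs]
    simp only [entD, Matrix.of_apply]
    refine Finset.sum_lt_sum
      (fun f _ => Finset.sum_le_sum fun g _ => key _ _ (hM f g) (hM' f g))
      ⟨f0, Finset.mem_univ f0, ?_⟩
    exact Finset.sum_lt_sum (fun g _ => key _ _ (hM f0 g) (hM' f0 g))
      ⟨g0, Finset.mem_univ g0, keylt _ _ (hM f0 g0) (hM' f0 g0) hfg⟩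
  -- uniqueness of the maximum-entropy minimizer
  have huniq : ∀ (M M' : Matrix (Fin F) (Fin G) ℝ),
      (∀ f g, 0 ≤ M f g) → (∀ f g, 0 ≤ M' f g) →
      (∀ N', (∀ f g, 0 ≤ N' f g) → J 0 M ≤ J 0 N') →
      (∀ N', (∀ f g, 0 ≤ N' f g) → J 0 M' ≤ J 0 N') →
      (∀ N', (∀ f g, 0 ≤ N' f g) →
        (∀ N'', (∀ f g, 0 ≤ N'' f g) → J 0 N' ≤ J 0 N'') → entD M ≤ entD N') →
      (∀ N', (∀ f g, 0 ≤ N' f g) →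
        (∀ N'', (∀ f g, 0 ≤ N'' f g) → J 0 N' ≤ J 0 N'') → entD M' ≤ entD N') →
      M = M' := by
    intro M M' hM hM' hMmin' hM'min hMent hM'ent
    by_contra hne
    have hPnn : ∀ f g, 0 ≤ (Matrix.of fun f g => (M f g + M' f g) / 2) f g := by
      intro f g
      have := hM f g; have := hM' f g
      show 0 ≤ (M f g + M' f g) / 2
      linarith
    have hJM : J 0 M = J 0 M' := le_antisymm (hMmin' M' hM') (hM'min M hM)
    have hPmin : ∀ N', (∀ f g, 0 ≤ N' f g) →
        J 0 (Matrix.of fun f g => (M f g + M' f g) / 2) ≤ J 0 N' := by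
      intro N' hN'
      calc J 0 (Matrix.of fun f g => (M f g + M' f g) / 2)
          ≤ (J 0 M + J 0 M') / 2 := hJ0conv M M' hM hM'
        _ = J 0 M := by rw [hJM]; ring
        _ ≤ J 0 N' := hMmin' N' hN'
    have h2 := hMent _ hPnn hPmin
    have h3 := hM'ent _ hPnn hPmin
    have h4 := hentconv M M' hM hM' hne
    linarith
  -- assembly
  have hstar := hprop (Matrix.of a) φ0 hφ0 haconv
  obtain ⟨hstar_nn, hstar_min, hstar_ent⟩ := hstar
  have hstar_lim : Tendsto (fun p => Ms (φ0 p)) atTop (nhds (Matrix.of a)) :=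
    tendsto_pi_nhds.mpr fun f => tendsto_pi_nhds.mpr fun g => haconv f g
  refine ⟨Matrix.of a, ⟨φ0, hφ0, hstar_lim⟩, ?_, hstar_nn, hstar_min, hstar_ent, ?_⟩
  · rintro N ⟨ψ, hψ, hNlim⟩
    have hNtd : ∀ f g, Tendsto (fun p => Ms (ψ p) f g) atTop (nhds (N f g)) :=
      fun f g => tendsto_pi_nhds.mp (tendsto_pi_nhds.mp hNlim f) g
    obtain ⟨hNnn, hNmin, hNent⟩ := hprop N ψ hψ hNtd
    exact ⟨hNnn, hNmin, hNent,
      huniq N (Matrix.of a) hNnn hstar_nn hNmin hstar_min hNent hstar_ent⟩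
  · intro M hM hMm hMe
    exact huniq M (Matrix.of a) hM hstar_nn hMm hstar_min hMe hstar_ent
end

section
/- Let F, G, T be positive integers, let A ∈ ℂ^{T×F} be a matrix whose first row has all entries equal to 1, let r̂ ∈ ℂ^T, and let ρ > 0. Then the set U_ρ = { M ∈ ℝ^{F×G} : M has nonnegative entries and ‖r̂ − A(M·1_G)‖₂² ≤ ρ } is a compact subset of ℝ^{F×G}. -/
open scoped BigOperators

/-- compactness of the feasibility set `U_ρ` of nonnegative matrices
whose row-sum vector maps under `A` (whose first row is all ones) to within
squared Euclidean distance `ρ` of `r̂`. -/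
theorem stmt1 (F G T : ℕ) (hF : 0 < F) (hG : 0 < G) (hT : 0 < T)
    (A : Matrix (Fin T) (Fin F) ℂ)
    (hA : ∀ f, A ⟨0, hT⟩ f = 1)
    (r : Fin T → ℂ) (ρ : ℝ) (hρ : 0 < ρ) :
    IsCompact {M : Matrix (Fin F) (Fin G) ℝ |
      (∀ f g, 0 ≤ M f g) ∧
      ∑ t, Complex.normSq (r t - ∑ f, A t f * ((∑ g, M f g : ℝ) : ℂ)) ≤ ρ} := by
  set t0 : Fin T := ⟨0, hT⟩
  set R : ℝ := (r t0).re + Real.sqrt ρ with hR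
  have hbox : IsCompact {M : Matrix (Fin F) (Fin G) ℝ | ∀ f g, M f g ∈ Set.Icc (0:ℝ) R} := by
    have he : {M : Matrix (Fin F) (Fin G) ℝ | ∀ f g, M f g ∈ Set.Icc (0:ℝ) R}
        = Set.pi Set.univ (fun _ : Fin F => Set.pi Set.univ (fun _ : Fin G => Set.Icc (0:ℝ) R)) := by
      ext M
      exact ⟨fun h f _ g _ => h f g, fun h f g => h f (Set.mem_univ f) g (Set.mem_univ g)⟩
    rw [he]
    exact isCompact_univ_pi fun _ => isCompact_univ_pi fun _ => isCompact_Icc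
  have hcont : Continuous fun M : Matrix (Fin F) (Fin G) ℝ =>
      ∑ t, Complex.normSq (r t - ∑ f, A t f * ((∑ g, M f g : ℝ) : ℂ)) := by
    apply continuous_finset_sum
    intro t _
    apply Complex.continuous_normSq.comp
    apply Continuous.sub continuous_const
    apply continuous_finset_sum
    intro f _
    exact continuous_const.mul (Complex.continuous_ofReal.comp
      (continuous_finset_sum _ fun g _ => continuous_id.matrix_elem f g))
  apply hbox.of_isClosed_subset
  · rw [Set.setOf_and]
    apply IsClosed.inter
    · simp only [Set.setOf_forall]
      exact isClosed_iInter fun f => isClosed_iInter fun g =>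
        isClosed_le continuous_const (continuous_id.matrix_elem f g)
    · exact isClosed_le hcont continuous_const
  · rintro M ⟨hpos, hle⟩
    have hS : ∑ f, ∑ g, M f g ≤ R := by
      have h1 : Complex.normSq (r t0 - ∑ f, A t0 f * ((∑ g, M f g : ℝ) : ℂ)) ≤ ρ := by
        refine le_trans ?_ hle
        exact Finset.single_le_sum
          (f := fun t => Complex.normSq (r t - ∑ f, A t f * ((∑ g, M f g : ℝ) : ℂ)))
          (fun t _ => Complex.normSq_nonneg _) (Finset.mem_univ t0)
      have h2 : (∑ f, A t0 f * ((∑ g, M f g : ℝ) : ℂ)) = ((∑ f, ∑ g, M f g : ℝ) : ℂ) := by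
        push_cast
        simp [hA]
      rw [h2] at h1
      set S : ℝ := ∑ f, ∑ g, M f g with hSdef
      have h3 : ((r t0).re - S)^2 ≤ ρ := by
        have hns := Complex.normSq_apply (r t0 - (S : ℂ))
        simp [Complex.sub_re, Complex.sub_im] at hns
        nlinarith [sq_nonneg ((r t0).im), h1, hns]
      have h4 : |(r t0).re - S| ≤ Real.sqrt ρ := by
        rw [← Real.sqrt_sq_eq_abs]
        exact Real.sqrt_le_sqrt h3
      have h5 := abs_le.mp h4
      linarith [h5.1]
    intro f g
    constructor
    · exact hpos f g
    · calc M f g ≤ ∑ g', M f g' :=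
            Finset.single_le_sum (fun g' _ => hpos f g') (Finset.mem_univ g)
        _ ≤ ∑ f', ∑ g', M f' g' :=
            Finset.single_le_sum (fun f' _ => Finset.sum_nonneg fun g' _ => hpos f' g')
              (Finset.mem_univ f)
        _ ≤ R := hS
end

section
/- Let U ⊆ ℝ^n be a nonempty compact convex set, let f : U → ℝ be continuous and convex, and let D : U → ℝ be continuous and strictly convex. Let (ε_p)_p be a sequence of positive reals with ε_p → 0, and for each p let M_p be a minimizer of f + ε_p·D over U. Then: (i) the set argmin_U f has a unique element M⋆ minimizing D over argmin_U f; (ii) every limit point of (M_p)_p equals M⋆; hence (iii) M_p → M⋆. -/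
open scoped BigOperators

/-- convergence of entropically regularized minimizers over a
compact convex set to the unique maximum-entropy (minimal-`D`) minimizer of `f`. -/
theorem stmt3 (n : ℕ) (U : Set (Fin n → ℝ)) (hUne : U.Nonempty)
    (hUcomp : IsCompact U) (hUconv : Convex ℝ U)
    (f D : (Fin n → ℝ) → ℝ)
    (hfc : ContinuousOn f U) (hfconv : ConvexOn ℝ U f)
    (hDc : ContinuousOn D U) (hDconv : StrictConvexOn ℝ U D)
    (εs : ℕ → ℝ) (hεpos : ∀ p, 0 < εs p)
    (hεlim : Filter.Tendsto εs Filter.atTop (nhds 0))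
    (Ms : ℕ → (Fin n → ℝ)) (hMU : ∀ p, Ms p ∈ U)
    (hMmin : ∀ p, ∀ x ∈ U, f (Ms p) + εs p * D (Ms p) ≤ f x + εs p * D x) :
    ∃ Mstar ∈ U,
      -- (i) M⋆ minimizes f over U and is the unique minimizer of D over argmin f
      (∀ x ∈ U, f Mstar ≤ f x) ∧
      (∀ x ∈ U, (∀ y ∈ U, f x ≤ f y) → D Mstar ≤ D x) ∧
      (∀ x ∈ U, (∀ y ∈ U, f x ≤ f y) →
        (∀ y ∈ U, (∀ z ∈ U, f y ≤ f z) → D x ≤ D y) → x = Mstar) ∧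
      -- (ii) every limit point of the sequence equals M⋆
      (∀ N : Fin n → ℝ,
        (∃ φ : ℕ → ℕ, StrictMono φ ∧
          Filter.Tendsto (fun p => Ms (φ p)) Filter.atTop (nhds N)) → N = Mstar) ∧
      -- (iii) the whole sequence converges to M⋆
      Filter.Tendsto Ms Filter.atTop (nhds Mstar) := by
  classical
  obtain ⟨m, hmU, hmmin⟩ := hUcomp.exists_isMinOn hUne hfc
  set A : Set (Fin n → ℝ) := {x ∈ U | f x ≤ f m} with hA
  have hAsub : A ⊆ U := fun x hx => hx.1
  have hAne : A.Nonempty := ⟨m, hmU, le_refl _⟩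
  have hAconv : Convex ℝ A := hfconv.convex_le (f m)
  have hAclosed : IsClosed A := by
    have h := hfc.preimage_isClosed_of_isClosed hUcomp.isClosed (isClosed_Iic (a := f m))
    have : A = U ∩ f ⁻¹' Set.Iic (f m) := by ext x; simp [hA, Set.mem_preimage]
    rw [this]; exact h
  have hAcomp : IsCompact A := hUcomp.of_isClosed_subset hAclosed hAsub
  have hAmem : ∀ x, x ∈ A ↔ (x ∈ U ∧ ∀ y ∈ U, f x ≤ f y) := by
    intro x
    constructor
    · rintro ⟨hxU, hxle⟩; exact ⟨hxU, fun y hy => hxle.trans (hmmin hy)⟩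
    · rintro ⟨hxU, h⟩; exact ⟨hxU, h m hmU⟩
  obtain ⟨Mstar, hMsA, hMsmin⟩ := hAcomp.exists_isMinOn hAne (hDc.mono hAsub)
  -- uniqueness of the D-minimizer on A
  have huniq : ∀ x ∈ A, (∀ y ∈ A, D x ≤ D y) → x = Mstar := by
    intro x hx hxmin
    by_contra hne
    have h2 : ((1:ℝ)/2) • x + ((1:ℝ)/2) • Mstar ∈ A :=
      hAconv hx hMsA (by norm_num) (by norm_num) (by norm_num)
    have hlt := hDconv.2 (hAsub hx) (hAsub hMsA) hne one_half_pos one_half_pos (by norm_num)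
    have h3 := hxmin _ h2
    have h4 : D Mstar ≤ D x := hMsmin hx
    have h5 : D x ≤ D Mstar := hxmin Mstar hMsA
    simp only [smul_eq_mul] at hlt
    linarith
  -- bounds on D over U
  obtain ⟨b, hbU, hb⟩ := hUcomp.exists_isMaxOn hUne hDc
  obtain ⟨a, haU, ha⟩ := hUcomp.exists_isMinOn hUne hDc
  -- key: limit points equal Mstar (version with Tendsto atTop)
  have key' : ∀ N : Fin n → ℝ, ∀ φ : ℕ → ℕ, Filter.Tendsto φ Filter.atTop Filter.atTop →
      Filter.Tendsto (fun p => Ms (φ p)) Filter.atTop (nhds N) → N = Mstar := by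
    intro N φ hφ hlim
    have hmemU : ∀ p, Ms (φ p) ∈ U := fun p => hMU (φ p)
    have hNU : N ∈ U := hUcomp.isClosed.mem_of_tendsto hlim
      (Filter.Eventually.of_forall hmemU)
    have hεφ : Filter.Tendsto (fun p => εs (φ p)) Filter.atTop (nhds 0) := hεlim.comp hφ
    have hin : Filter.Tendsto (fun p => Ms (φ p)) Filter.atTop (nhdsWithin N U) :=
      tendsto_nhdsWithin_iff.2 ⟨hlim, Filter.Eventually.of_forall hmemU⟩
    have hflim : Filter.Tendsto (fun p => f (Ms (φ p))) Filter.atTop (nhds (f N)) :=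
      (hfc N hNU).tendsto.comp hin
    have hDlim : Filter.Tendsto (fun p => D (Ms (φ p))) Filter.atTop (nhds (D N)) :=
      (hDc N hNU).tendsto.comp hin
    have hNA : N ∈ A := by
      rw [hAmem]
      refine ⟨hNU, fun y hy => ?_⟩
      have h1 : ∀ p, f (Ms (φ p)) ≤ f y + εs (φ p) * (D b - D a) := by
        intro p
        have h := hMmin (φ p) y hy
        have hD1 : D a ≤ D (Ms (φ p)) := ha (hmemU p)
        have hD2 : D y ≤ D b := hb hy
        nlinarith [hεpos (φ p)]
      have hr : Filter.Tendsto (fun p => f y + εs (φ p) * (D b - D a))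
          Filter.atTop (nhds (f y + 0 * (D b - D a))) :=
        Filter.Tendsto.add tendsto_const_nhds (hεφ.mul tendsto_const_nhds)
      have := le_of_tendsto_of_tendsto' hflim hr h1
      simpa using this
    have hNmin : ∀ y ∈ A, D N ≤ D y := by
      intro y hy
      have h1 : ∀ p, D (Ms (φ p)) ≤ D y := by
        intro p
        have h2 := hMmin (φ p) y (hAsub hy)
        have h3 : f y ≤ f (Ms (φ p)) := ((hAmem y).1 hy).2 _ (hmemU p)
        nlinarith [hεpos (φ p)]
      exact le_of_tendsto' hDlim h1
    exact huniq N hNA hNmin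
  have key : ∀ N : Fin n → ℝ,
      (∃ φ : ℕ → ℕ, StrictMono φ ∧
        Filter.Tendsto (fun p => Ms (φ p)) Filter.atTop (nhds N)) → N = Mstar := by
    rintro N ⟨φ, hφ, hlim⟩
    exact key' N φ hφ.tendsto_atTop hlim
  refine ⟨Mstar, hAsub hMsA, ((hAmem Mstar).1 hMsA).2, ?_, ?_, key, ?_⟩
  · intro x hxU hxmin
    exact hMsmin ((hAmem x).2 ⟨hxU, hxmin⟩)
  · intro x hxU hxmin hxDmin
    refine huniq x ((hAmem x).2 ⟨hxU, hxmin⟩) ?_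
    intro y hy
    exact hxDmin y (hAsub hy) ((hAmem y).1 hy).2
  · apply Filter.tendsto_of_subseq_tendsto
    intro ns hns
    obtain ⟨c, hcU, ψ, hψ, hl⟩ := hUcomp.tendsto_subseq (fun p => hMU (ns p))
    refine ⟨ψ, ?_⟩
    have hc : c = Mstar := key' c (ns ∘ ψ) (hns.comp hψ.tendsto_atTop) hl
    rwa [hc] at hl
end

section
/- Let F, G be positive integers, C ∈ ℝ^{F×G}, u ∈ ℝ^F, ν^j ∈ ℝ^F with strictly positive entries, and γ, ζ, ε, η > 0. For ν ∈ ℝ^F with nonnegative entries define S_c(ν) = min{ ⟨C, M⟩ + ε·D(M) + η·‖M‖_{∞,1} : M ∈ ℝ^{F×G}, M ≥ 0, M·1_G = ν }, and define the primal objective P(ν) = γ⟨u, ν⟩ + D_KL(ν, ν^j) + γζ·S_c(ν). For λ ∈ ℝ^F and Ψ ∈ ℝ^{F×G} with ‖Ψ‖_{1,∞} ≤ η define the dual objective Φ(λ, Ψ) = γζε·⟨K ⊙ W, v·1_Gᵀ⟩ + ⟨ν^j, exp(−γu − γζλ)⟩, where v = exp(λ/ε), K = exp(−C/ε), W = exp(Ψ/ε),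 all exponentials taken entrywise and ⊙ denoting entrywise product. Then Φ attains its minimum at some (λ⋆, Ψ⋆) with ‖Ψ⋆‖_{1,∞} ≤ η, the vector ν⋆ = ν^j ⊙ exp(−γu − γζλ⋆) is the unique minimizer of P over the nonnegative orthant, and the matrix M⋆ = diag(v⋆)(K ⊙ W⋆), with v⋆ = exp(λ⋆/ε) and W⋆ = exp(Ψ⋆/ε), attains the minimum defining S_c(ν⋆). -/
open scoped BigOperators

/-- Mixed norm `‖Ψ‖_{1,∞} = max_g Σ_f |Ψ_{f,g}|`. -/
noncomputable def mixedOneInf {F G : ℕ} (M : Matrix (Fin F) (Fin G) ℝ) : ℝ :=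
  ⨆ g, ∑ f, |M f g|

/-- Kullback–Leibler divergence `D_KL(ν, ν') = Σ_f (ν_f log(ν_f/ν'_f) + ν'_f − ν_f)`. -/
noncomputable def klDiv' {F : ℕ} (ν ν' : Fin F → ℝ) : ℝ :=
  ∑ f, (ν f * Real.log (ν f / ν' f) + ν' f - ν f)

/- ============ auxiliary lemmas ============ -/

lemma gibbs_ge (x y : ℝ) (hx : 0 ≤ x) (hy : 0 < y) :
    0 ≤ x * Real.log x - x * Real.log y - x + y := by
  rcases eq_or_lt_of_le hx with h0 | hx'
  · simp [← h0]; linarith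
  · have h1 : Real.log (x/y)⁻¹ ≤ (x/y)⁻¹ - 1 := Real.log_le_sub_one_of_pos (by positivity)
    rw [Real.log_inv] at h1
    have hlog : Real.log (x/y) = Real.log x - Real.log y :=
      Real.log_div (ne_of_gt hx') (ne_of_gt hy)
    have hinv : (x/y)⁻¹ = y / x := by field_simp
    rw [hinv, hlog] at h1
    have h3 : x * (Real.log x - Real.log y) ≥ x * (1 - y/x) := by nlinarith
    have h4 : x * (1 - y/x) = x - y := by field_simp
    nlinarith

lemma gibbs_gt (x y : ℝ) (hx : 0 ≤ x) (hy : 0 < y) (hxy : x ≠ y) :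
    0 < x * Real.log x - x * Real.log y - x + y := by
  rcases eq_or_lt_of_le hx with h0 | hx'
  · simp [← h0]; linarith
  · have hne : (x/y)⁻¹ ≠ 1 := by
      simp only [ne_eq, inv_eq_one]
      intro h; exact hxy (by field_simp at h; linarith)
    have h1 : Real.log (x/y)⁻¹ < (x/y)⁻¹ - 1 := Real.log_lt_sub_one_of_pos (by positivity) hne
    rw [Real.log_inv] at h1
    have hlog : Real.log (x/y) = Real.log x - Real.log y :=
      Real.log_div (ne_of_gt hx') (ne_of_gt hy)
    have hinv : (x/y)⁻¹ = y / x := by field_simp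
    rw [hinv, hlog] at h1
    have h3 : x * (Real.log x - Real.log y) > x * (1 - y/x) := by nlinarith
    have h4 : x * (1 - y/x) = x - y := by field_simp
    nlinarith

lemma entPoint_ge (ε m a : ℝ) (hε : 0 < ε) (hm : 0 ≤ m) (ha : 0 < a) :
    ε * (1 - a) ≤ (-(ε * Real.log a)) * m + ε * (m * Real.log m - m + 1) := by
  nlinarith [mul_nonneg hε.le (gibbs_ge m a hm ha)]

lemma deriv_nonneg_of_isMinOn_Icc {f : ℝ → ℝ} {d : ℝ}
    (hf : HasDerivAt f d 0) (h : ∀ t ∈ Set.Icc (0:ℝ) 1, f 0 ≤ f t) : 0 ≤ d := by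
  have hs := hasDerivAt_iff_tendsto_slope.mp hf
  have hle : nhdsWithin (0:ℝ) (Set.Ioi 0) ≤ nhdsWithin 0 {(0:ℝ)}ᶜ := by
    apply nhdsWithin_mono
    intro x hx
    exact ne_of_gt hx
  have hs' : Filter.Tendsto (slope f 0) (nhdsWithin 0 (Set.Ioi 0)) (nhds d) :=
    hs.mono_left hle
  refine ge_of_tendsto hs' ?_
  filter_upwards [Ioc_mem_nhdsGT_of_mem (Set.left_mem_Ico.mpr one_pos)] with t ht
  have ht0 : 0 < t := ht.1
  have hft := h t ⟨ht0.le, ht.2⟩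
  rw [slope_def_field]
  exact div_nonneg (by linarith) (by linarith)

lemma hasDerivAt_cexp (c a b x : ℝ) :
    HasDerivAt (fun t => c * Real.exp (a + b * t)) (c * b * Real.exp (a + b * x)) x := by
  have h : HasDerivAt (fun t : ℝ => a + b * t) b x := by
    simpa using ((hasDerivAt_id x).const_mul b).const_add a
  have := ((Real.hasDerivAt_exp (a + b * x)).comp x h).const_mul c
  simpa [mul_comm, mul_assoc, mul_left_comm] using this


lemma exists_dual_min (F G : ℕ) (hF : 0 < F) (hG : 0 < G)
    (C : Matrix (Fin F) (Fin G) ℝ) (u : Fin F → ℝ)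
    (νj : Fin F → ℝ) (hνj : ∀ f, 0 < νj f)
    (γ ζ ε η : ℝ) (hγ : 0 < γ) (hζ : 0 < ζ) (hε : 0 < ε) (hη : 0 < η)
    (Φ : (Fin F → ℝ) → Matrix (Fin F) (Fin G) ℝ → ℝ)
    (hΦ : ∀ (lam : Fin F → ℝ) (Ψ : Matrix (Fin F) (Fin G) ℝ), Φ lam Ψ =
      γ * ζ * ε * (∑ f, ∑ g,
        Real.exp (-(C f g) / ε) * Real.exp (Ψ f g / ε) * Real.exp (lam f / ε))
      + ∑ f, νj f * Real.exp (-(γ * u f) - γ * ζ * lam f)) :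
    ∃ (lams : Fin F → ℝ) (Ψs : Matrix (Fin F) (Fin G) ℝ),
      (∀ g, ∑ f, |Ψs f g| ≤ η) ∧
      (∀ (lam : Fin F → ℝ) (Ψ : Matrix (Fin F) (Fin G) ℝ),
        (∀ g, ∑ f, |Ψ f g| ≤ η) → Φ lams Ψs ≤ Φ lam Ψ) := by
  classical
  set Dp : ((Fin F → ℝ) × Matrix (Fin F) (Fin G) ℝ) → ℝ :=
    fun p => γ * ζ * ε * (∑ f, ∑ g,
        Real.exp (-(C f g) / ε) * Real.exp (p.2 f g / ε) * Real.exp (p.1 f / ε))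
      + ∑ f, νj f * Real.exp (-(γ * u f) - γ * ζ * p.1 f) with hDp
  have hΦD : ∀ p : (Fin F → ℝ) × Matrix (Fin F) (Fin G) ℝ, Φ p.1 p.2 = Dp p := by
    intro p; rw [hΦ]
  have hcont : Continuous Dp := by
    rw [hDp]; fun_prop
  have hsum2_nonneg : ∀ (p : (Fin F → ℝ) × Matrix (Fin F) (Fin G) ℝ),
      0 ≤ ∑ f, νj f * Real.exp (-(γ * u f) - γ * ζ * p.1 f) := by
    intro p; exact Finset.sum_nonneg fun f _ => mul_nonneg (hνj f).le (Real.exp_pos _).le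
  obtain ⟨c₀, hc₀⟩ : ∃ c₀, Dp (0, 0) = c₀ := ⟨_, rfl⟩
  have hc₀pos : 0 < c₀ := by
    rw [← hc₀, hDp]
    have h1 : 0 < ∑ f, νj f * Real.exp (-(γ * u f) - γ * ζ * ((0:Fin F → ℝ)) f) :=
      Finset.sum_pos (fun f _ => mul_pos (hνj f) (Real.exp_pos _))
        ⟨⟨0, hF⟩, Finset.mem_univ _⟩
    have h2 : (0:ℝ) ≤ γ * ζ * ε * (∑ f, ∑ g, Real.exp (-(C f g) / ε)
        * Real.exp (((0 : Matrix (Fin F) (Fin G) ℝ)) f g / ε)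
        * Real.exp (((0:Fin F → ℝ)) f / ε)) := by
      have : (0:ℝ) ≤ ∑ f, ∑ g, Real.exp (-(C f g) / ε)
          * Real.exp (((0 : Matrix (Fin F) (Fin G) ℝ)) f g / ε)
          * Real.exp (((0:Fin F → ℝ)) f / ε) :=
        Finset.sum_nonneg fun f _ => Finset.sum_nonneg fun g _ => by positivity
      exact mul_nonneg (by positivity) this
    exact lt_of_lt_of_le h1 (by dsimp only; linarith)
  set g₀ : Fin G := ⟨0, hG⟩ with hg₀
  set T : Set ((Fin F → ℝ) × Matrix (Fin F) (Fin G) ℝ) :=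
    {p | (∀ g, ∑ f, |p.2 f g| ≤ η) ∧ Dp p ≤ c₀} with hT
  have h0T : (0, 0) ∈ T := ⟨fun g => by simp [hη.le], le_of_eq hc₀⟩
  have hboundΨ : ∀ p ∈ T, ∀ f g, |p.2 f g| ≤ η := by
    intro p hp f g
    calc |p.2 f g| ≤ ∑ f', |p.2 f' g| :=
          Finset.single_le_sum (f := fun f' => |p.2 f' g|) (fun _ _ => abs_nonneg _)
            (Finset.mem_univ f)
      _ ≤ η := hp.1 g
  -- single term bounds
  have hterm1 : ∀ p ∈ T, ∀ f, γ * ζ * ε * (Real.exp (-(C f g₀) / ε)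
      * Real.exp (p.2 f g₀ / ε) * Real.exp (p.1 f / ε)) ≤ c₀ := by
    intro p hp f
    have h1 : Real.exp (-(C f g₀) / ε) * Real.exp (p.2 f g₀ / ε) * Real.exp (p.1 f / ε)
        ≤ ∑ g, Real.exp (-(C f g) / ε) * Real.exp (p.2 f g / ε) * Real.exp (p.1 f / ε) :=
      Finset.single_le_sum (f := fun g => Real.exp (-(C f g) / ε) * Real.exp (p.2 f g / ε)
        * Real.exp (p.1 f / ε)) (fun _ _ => by positivity) (Finset.mem_univ g₀)
    have h2 : (∑ g, Real.exp (-(C f g) / ε) * Real.exp (p.2 f g / ε) * Real.exp (p.1 f / ε))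
        ≤ ∑ f', ∑ g, Real.exp (-(C f' g) / ε) * Real.exp (p.2 f' g / ε)
          * Real.exp (p.1 f' / ε) :=
      Finset.single_le_sum (f := fun f' => ∑ g, Real.exp (-(C f' g) / ε)
        * Real.exp (p.2 f' g / ε) * Real.exp (p.1 f' / ε))
        (fun _ _ => Finset.sum_nonneg fun _ _ => by positivity) (Finset.mem_univ f)
    have h3 := hsum2_nonneg p
    have h4 : Dp p ≤ c₀ := hp.2
    rw [hDp] at h4
    have hγζε : (0:ℝ) < γ * ζ * ε := by positivity
    nlinarith [mul_le_mul_of_nonneg_left (h1.trans h2) hγζε.le]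
  have hterm2 : ∀ p ∈ T, ∀ f, νj f * Real.exp (-(γ * u f) - γ * ζ * p.1 f) ≤ c₀ := by
    intro p hp f
    have h1 : νj f * Real.exp (-(γ * u f) - γ * ζ * p.1 f)
        ≤ ∑ f', νj f' * Real.exp (-(γ * u f') - γ * ζ * p.1 f') :=
      Finset.single_le_sum (f := fun f' => νj f' * Real.exp (-(γ * u f') - γ * ζ * p.1 f'))
        (fun f' _ => mul_nonneg (hνj f').le (Real.exp_pos _).le) (Finset.mem_univ f)
    have h4 : Dp p ≤ c₀ := hp.2
    rw [hDp] at h4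
    have h5 : (0:ℝ) ≤ γ * ζ * ε * (∑ f', ∑ g, Real.exp (-(C f' g) / ε)
        * Real.exp (p.2 f' g / ε) * Real.exp (p.1 f' / ε)) := by
      have : (0:ℝ) ≤ ∑ f', ∑ g, Real.exp (-(C f' g) / ε)
          * Real.exp (p.2 f' g / ε) * Real.exp (p.1 f' / ε) :=
        Finset.sum_nonneg fun f' _ => Finset.sum_nonneg fun g _ => by positivity
      exact mul_nonneg (by positivity) this
    linarith
  set hi : Fin F → ℝ := fun f =>
    ε * Real.log (c₀ / (γ * ζ * ε * (Real.exp (-(C f g₀) / ε) * Real.exp (-η / ε)))) with hhi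
  set lo : Fin F → ℝ := fun f =>
    -(Real.log (c₀ / νj f) + γ * u f) / (γ * ζ) with hlo
  have hboundhi : ∀ p ∈ T, ∀ f, p.1 f ≤ hi f := by
    intro p hp f
    have hb := hboundΨ p hp f g₀
    have hΨlb : Real.exp (-η / ε) ≤ Real.exp (p.2 f g₀ / ε) :=
      Real.exp_le_exp.mpr ((div_le_div_iff_of_pos_right hε).mpr (neg_le_of_abs_le hb))
    have h1 := hterm1 p hp f
    have hden : (0:ℝ) < γ * ζ * ε * (Real.exp (-(C f g₀) / ε) * Real.exp (-η / ε)) := by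
      positivity
    have h2 : Real.exp (p.1 f / ε)
        ≤ c₀ / (γ * ζ * ε * (Real.exp (-(C f g₀) / ε) * Real.exp (-η / ε))) := by
      rw [le_div_iff₀ hden]
      have hint := mul_le_mul_of_nonneg_left hΨlb
        (show (0:ℝ) ≤ γ * ζ * ε * (Real.exp (-(C f g₀) / ε) * Real.exp (p.1 f / ε)) by
          positivity)
      nlinarith [hint, h1]
    have h3 := Real.log_le_log (Real.exp_pos _) h2
    rw [Real.log_exp] at h3
    have h4 : p.1 f = ε * (p.1 f / ε) := by field_simp
    rw [hhi, h4]
    exact mul_le_mul_of_nonneg_left h3 hε.le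
  have hboundlo : ∀ p ∈ T, ∀ f, lo f ≤ p.1 f := by
    intro p hp f
    have h1 := hterm2 p hp f
    have h2 : Real.exp (-(γ * u f) - γ * ζ * p.1 f) ≤ c₀ / νj f := by
      rw [le_div_iff₀ (hνj f)]; nlinarith [Real.exp_pos (-(γ * u f) - γ * ζ * p.1 f)]
    have h3 := Real.log_le_log (Real.exp_pos _) h2
    rw [Real.log_exp] at h3
    rw [hlo]
    rw [div_le_iff₀ (by positivity : (0:ℝ) < γ * ζ)]
    nlinarith
  -- compact superset
  set K : Set ((Fin F → ℝ) × Matrix (Fin F) (Fin G) ℝ) :=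
    (Set.univ.pi fun f => Set.Icc (lo f) (hi f)) ×ˢ
      (Set.univ.pi fun f => Set.univ.pi fun _ => Set.Icc (-η) η) with hK
  have hKcomp : IsCompact K :=
    (isCompact_univ_pi fun f => isCompact_Icc).prod
      (isCompact_univ_pi fun f => isCompact_univ_pi fun _ => isCompact_Icc)
  have hTK : T ⊆ K := by
    intro p hp
    constructor
    · intro f _
      exact ⟨hboundlo p hp f, hboundhi p hp f⟩
    · intro f _ g _
      exact abs_le.mp (hboundΨ p hp f g)
  have hTclosed : IsClosed T := by
    have h1 : IsClosed {p : (Fin F → ℝ) × Matrix (Fin F) (Fin G) ℝ |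
        ∀ g, ∑ f, |p.2 f g| ≤ η} := by
      rw [Set.setOf_forall]
      exact isClosed_iInter fun g => isClosed_le (by fun_prop) continuous_const
    have h2 : IsClosed {p : (Fin F → ℝ) × Matrix (Fin F) (Fin G) ℝ | Dp p ≤ c₀} :=
      isClosed_le hcont continuous_const
    exact h1.inter h2
  have hTcomp : IsCompact T := hKcomp.of_isClosed_subset hTclosed hTK
  obtain ⟨ps, hpsT, hmin⟩ := hTcomp.exists_isMinOn ⟨(0,0), h0T⟩ hcont.continuousOn
  refine ⟨ps.1, ps.2, hpsT.1, ?_⟩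
  intro lam Ψ hΨ
  calc Φ ps.1 ps.2 = Dp ps := hΦD ps
    _ ≤ Dp (lam, Ψ) := by
        by_cases hD : Dp (lam, Ψ) ≤ c₀
        · exact hmin ⟨hΨ, hD⟩
        · exact hpsT.2.trans (not_le.mp hD).le
    _ = Φ lam Ψ := (hΦD (lam, Ψ)).symm

lemma dual_stationarity (F G : ℕ)
    (C : Matrix (Fin F) (Fin G) ℝ) (u : Fin F → ℝ) (νj : Fin F → ℝ)
    (γ ζ ε : ℝ) (hγ : 0 < γ) (hζ : 0 < ζ) (hε : 0 < ε)
    (Φ : (Fin F → ℝ) → Matrix (Fin F) (Fin G) ℝ → ℝ)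
    (hΦ : ∀ (lam : Fin F → ℝ) (Ψ : Matrix (Fin F) (Fin G) ℝ), Φ lam Ψ =
      γ * ζ * ε * (∑ f, ∑ g,
        Real.exp (-(C f g) / ε) * Real.exp (Ψ f g / ε) * Real.exp (lam f / ε))
      + ∑ f, νj f * Real.exp (-(γ * u f) - γ * ζ * lam f))
    (lams : Fin F → ℝ) (Ψs : Matrix (Fin F) (Fin G) ℝ)
    (hmin : ∀ lam, Φ lams Ψs ≤ Φ lam Ψs) (f₀ : Fin F) :
    (∑ g, Real.exp (-(C f₀ g) / ε) * Real.exp (Ψs f₀ g / ε)) * Real.exp (lams f₀ / ε)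
      = νj f₀ * Real.exp (-(γ * u f₀) - γ * ζ * lams f₀) := by
  classical
  set A : ℝ := ∑ g, Real.exp (-(C f₀ g) / ε) * Real.exp (Ψs f₀ g / ε) with hA
  set B : ℝ := γ * ζ * ε * (∑ f ∈ Finset.univ.erase f₀, ∑ g,
      Real.exp (-(C f g) / ε) * Real.exp (Ψs f g / ε) * Real.exp (lams f / ε))
    + ∑ f ∈ Finset.univ.erase f₀, νj f * Real.exp (-(γ * u f) - γ * ζ * lams f) with hB
  set φ : ℝ → ℝ := fun t => Φ (Function.update lams f₀ t) Ψs with hφ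
  have hfun : φ = fun t => (γ * ζ * ε * A) * Real.exp (0 + (1/ε) * t)
      + ((νj f₀ * Real.exp (-(γ * u f₀))) * Real.exp (0 + (-(γ * ζ)) * t) + B) := by
    funext t
    rw [hφ]; dsimp only; rw [hΦ]
    rw [← Finset.add_sum_erase _ _ (Finset.mem_univ f₀),
        ← Finset.add_sum_erase _
          (fun f => νj f * Real.exp (-(γ * u f) - γ * ζ * Function.update lams f₀ t f))
          (Finset.mem_univ f₀)]
    have hrest1 : ∑ f ∈ Finset.univ.erase f₀, ∑ g, Real.exp (-(C f g) / ε)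
        * Real.exp (Ψs f g / ε) * Real.exp (Function.update lams f₀ t f / ε)
        = ∑ f ∈ Finset.univ.erase f₀, ∑ g, Real.exp (-(C f g) / ε)
        * Real.exp (Ψs f g / ε) * Real.exp (lams f / ε) := by
      refine Finset.sum_congr rfl fun f hf => ?_
      rw [Function.update_of_ne (Finset.ne_of_mem_erase hf)]
    have hrest2 : ∑ f ∈ Finset.univ.erase f₀,
        νj f * Real.exp (-(γ * u f) - γ * ζ * Function.update lams f₀ t f)
        = ∑ f ∈ Finset.univ.erase f₀, νj f * Real.exp (-(γ * u f) - γ * ζ * lams f) := by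
      refine Finset.sum_congr rfl fun f hf => ?_
      rw [Function.update_of_ne (Finset.ne_of_mem_erase hf)]
    rw [hrest1, hrest2, Function.update_self]
    have e1 : Real.exp (0 + (1/ε) * t) = Real.exp (t / ε) := by congr 1; ring
    have e2 : Real.exp (-(γ * u f₀)) * Real.exp (0 + (-(γ * ζ)) * t)
        = Real.exp (-(γ * u f₀) - γ * ζ * t) := by rw [← Real.exp_add]; congr 1; ring
    have e3 : ∑ g, Real.exp (-(C f₀ g) / ε) * Real.exp (Ψs f₀ g / ε) * Real.exp (t / ε)
        = A * Real.exp (t / ε) := by rw [hA, Finset.sum_mul]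
    rw [e3, e1, hB]
    have e2' : (νj f₀ * Real.exp (-(γ * u f₀))) * Real.exp (0 + (-(γ * ζ)) * t)
        = νj f₀ * Real.exp (-(γ * u f₀) - γ * ζ * t) := by rw [mul_assoc, e2]
    rw [e2']
    ring
  have hderiv : HasDerivAt φ
      ((γ * ζ * ε * A) * (1/ε) * Real.exp (0 + (1/ε) * lams f₀)
        + (νj f₀ * Real.exp (-(γ * u f₀))) * (-(γ * ζ))
          * Real.exp (0 + (-(γ * ζ)) * lams f₀)) (lams f₀) := by
    rw [hfun]
    exact (hasDerivAt_cexp _ _ _ _).add ((hasDerivAt_cexp _ _ _ _).add_const B)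
  have hlocmin : IsLocalMin φ (lams f₀) := by
    apply Filter.Eventually.of_forall
    intro t
    have : φ (lams f₀) = Φ lams Ψs := by rw [hφ]; dsimp only; rw [Function.update_eq_self]
    rw [this]
    exact hmin _
  have hd0 := hlocmin.deriv_eq_zero
  rw [hderiv.deriv] at hd0
  have e1 : Real.exp (0 + (1/ε) * lams f₀) = Real.exp (lams f₀ / ε) := by congr 1; ring
  have e2 : Real.exp (-(γ * u f₀)) * Real.exp (0 + (-(γ * ζ)) * lams f₀)
      = Real.exp (-(γ * u f₀) - γ * ζ * lams f₀) := by rw [← Real.exp_add]; congr 1; ring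
  rw [e1] at hd0
  have hγζ : (γ : ℝ) * ζ ≠ 0 := by positivity
  have hεne : (ε : ℝ) ≠ 0 := ne_of_gt hε
  have expand : (γ * ζ * ε * A) * (1/ε) = γ * ζ * A := by field_simp
  rw [expand] at hd0
  have : γ * ζ * A * Real.exp (lams f₀ / ε)
      = γ * ζ * (νj f₀ * (Real.exp (-(γ * u f₀)) * Real.exp (0 + (-(γ * ζ)) * lams f₀))) := by
    nlinarith [hd0]
  rw [e2] at this
  have hne : (0:ℝ) < γ * ζ := by positivity
  nlinarith [this]

lemma dual_VI (F G : ℕ)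
    (C : Matrix (Fin F) (Fin G) ℝ) (u : Fin F → ℝ) (νj : Fin F → ℝ)
    (γ ζ ε η : ℝ) (hγ : 0 < γ) (hζ : 0 < ζ) (hε : 0 < ε) (hη : 0 < η)
    (Φ : (Fin F → ℝ) → Matrix (Fin F) (Fin G) ℝ → ℝ)
    (hΦ : ∀ (lam : Fin F → ℝ) (Ψ : Matrix (Fin F) (Fin G) ℝ), Φ lam Ψ =
      γ * ζ * ε * (∑ f, ∑ g,
        Real.exp (-(C f g) / ε) * Real.exp (Ψ f g / ε) * Real.exp (lam f / ε))
      + ∑ f, νj f * Real.exp (-(γ * u f) - γ * ζ * lam f))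
    (lams : Fin F → ℝ) (Ψs Ψh : Matrix (Fin F) (Fin G) ℝ)
    (hΨs : ∀ g, ∑ f, |Ψs f g| ≤ η) (hΨh : ∀ g, ∑ f, |Ψh f g| ≤ η)
    (hmin : ∀ Ψ : Matrix (Fin F) (Fin G) ℝ, (∀ g, ∑ f, |Ψ f g| ≤ η) →
      Φ lams Ψs ≤ Φ lams Ψ) :
    0 ≤ ∑ f, ∑ g, (Real.exp (lams f / ε) * (Real.exp (-(C f g) / ε)
      * Real.exp (Ψs f g / ε))) * (Ψh f g - Ψs f g) := by
  classical
  set d : Matrix (Fin F) (Fin G) ℝ := fun f g => Ψh f g - Ψs f g with hd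
  set S2 : ℝ := ∑ f, νj f * Real.exp (-(γ * u f) - γ * ζ * lams f) with hS2
  set ψ : ℝ → ℝ := fun t => Φ lams (fun f g => Ψs f g + t * d f g) with hψ
  have hfun : ψ = fun t => γ * ζ * ε * (∑ f, ∑ g,
      (Real.exp (-(C f g) / ε) * Real.exp (lams f / ε))
        * Real.exp (Ψs f g / ε + (d f g / ε) * t)) + S2 := by
    funext t
    rw [hψ]; dsimp only; refine (hΦ _ _).trans ?_; beta_reduce
    congr 1
    congr 1
    refine Finset.sum_congr rfl fun f _ => Finset.sum_congr rfl fun g _ => ?_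
    have harg : (Ψs f g + t * d f g) / ε = Ψs f g / ε + (d f g / ε) * t := by ring
    rw [harg, mul_right_comm]
  have hderiv : HasDerivAt ψ (γ * ζ * ε * (∑ f, ∑ g,
      (Real.exp (-(C f g) / ε) * Real.exp (lams f / ε)) * (d f g / ε)
        * Real.exp (Ψs f g / ε + (d f g / ε) * 0))) 0 := by
    rw [hfun]
    exact ((HasDerivAt.fun_sum fun f _ => HasDerivAt.fun_sum fun g _ =>
      hasDerivAt_cexp _ _ _ _).const_mul _).add_const S2
  have hmin01 : ∀ t ∈ Set.Icc (0:ℝ) 1, ψ 0 ≤ ψ t := by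
    intro t ht
    have h0 : ψ 0 = Φ lams Ψs := by
      rw [hψ]; dsimp only; congr 1; funext f g; ring
    rw [h0, hψ]
    apply hmin
    intro g
    have hb : ∀ f, |Ψs f g + t * d f g| ≤ (1 - t) * |Ψs f g| + t * |Ψh f g| := by
      intro f
      have : Ψs f g + t * d f g = (1 - t) * Ψs f g + t * Ψh f g := by rw [hd]; ring
      rw [this]
      calc |(1 - t) * Ψs f g + t * Ψh f g| ≤ |(1 - t) * Ψs f g| + |t * Ψh f g| :=
            abs_add_le _ _
        _ = (1 - t) * |Ψs f g| + t * |Ψh f g| := by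
            rw [abs_mul, abs_mul, abs_of_nonneg (by linarith [ht.2] : (0:ℝ) ≤ 1 - t),
              abs_of_nonneg ht.1]
    calc ∑ f, |Ψs f g + t * d f g| ≤ ∑ f, ((1 - t) * |Ψs f g| + t * |Ψh f g|) :=
          Finset.sum_le_sum fun f _ => hb f
      _ = (1 - t) * (∑ f, |Ψs f g|) + t * (∑ f, |Ψh f g|) := by
          rw [Finset.sum_add_distrib, Finset.mul_sum, Finset.mul_sum]
      _ ≤ (1 - t) * η + t * η := by
          have h1 := hΨs g; have h2 := hΨh g
          have ht1 : (0:ℝ) ≤ 1 - t := by linarith [ht.2]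
          have := mul_le_mul_of_nonneg_left h1 ht1
          have := mul_le_mul_of_nonneg_left h2 ht.1
          linarith
      _ = η := by ring
  have hd0 := deriv_nonneg_of_isMinOn_Icc hderiv hmin01
  have heq : γ * ζ * ε * (∑ f, ∑ g,
      (Real.exp (-(C f g) / ε) * Real.exp (lams f / ε)) * (d f g / ε)
        * Real.exp (Ψs f g / ε + (d f g / ε) * 0))
      = (γ * ζ) * ∑ f, ∑ g, (Real.exp (lams f / ε) * (Real.exp (-(C f g) / ε)
        * Real.exp (Ψs f g / ε))) * (Ψh f g - Ψs f g) := by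
    rw [Finset.mul_sum, Finset.mul_sum]
    refine Finset.sum_congr rfl fun f _ => ?_
    rw [Finset.mul_sum, Finset.mul_sum]
    refine Finset.sum_congr rfl fun g _ => ?_
    have : Ψs f g / ε + (d f g / ε) * 0 = Ψs f g / ε := by ring
    rw [this, hd]
    field_simp
  rw [heq] at hd0
  have : (0:ℝ) < γ * ζ := by positivity
  exact nonneg_of_mul_nonneg_right hd0 this

/-- Proposition 1 of the paper: the Bregman proximal update and the
corresponding optimal transport plan are given in closed form by the solution of
the dual problem. -/
theorem stmt4 (F G : ℕ) (hF : 0 < F) (hG : 0 < G)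
    (C : Matrix (Fin F) (Fin G) ℝ) (u : Fin F → ℝ)
    (νj : Fin F → ℝ) (hνj : ∀ f, 0 < νj f)
    (γ ζ ε η : ℝ) (hγ : 0 < γ) (hζ : 0 < ζ) (hε : 0 < ε) (hη : 0 < η)
    (Sc : (Fin F → ℝ) → ℝ)
    (hSc : ∀ ν : Fin F → ℝ, Sc ν = sInf {y | ∃ M : Matrix (Fin F) (Fin G) ℝ,
        (∀ f g, 0 ≤ M f g) ∧ (∀ f, ∑ g, M f g = ν f) ∧
        y = frob C M + ε * entD M + η * mixedInfOne M})
    (P : (Fin F → ℝ) → ℝ)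
    (hP : ∀ ν : Fin F → ℝ, P ν = γ * (∑ f, u f * ν f) + klDiv' ν νj + γ * ζ * Sc ν)
    (Φ : (Fin F → ℝ) → Matrix (Fin F) (Fin G) ℝ → ℝ)
    (hΦ : ∀ (lam : Fin F → ℝ) (Ψ : Matrix (Fin F) (Fin G) ℝ), Φ lam Ψ =
      γ * ζ * ε * (∑ f, ∑ g,
        Real.exp (-(C f g) / ε) * Real.exp (Ψ f g / ε) * Real.exp (lam f / ε))
      + ∑ f, νj f * Real.exp (-(γ * u f) - γ * ζ * lam f)) :
    ∃ (lams : Fin F → ℝ) (Ψs : Matrix (Fin F) (Fin G) ℝ),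
      mixedOneInf Ψs ≤ η ∧
      -- (λ⋆, Ψ⋆) minimizes the dual objective subject to ‖Ψ‖_{1,∞} ≤ η
      (∀ (lam : Fin F → ℝ) (Ψ : Matrix (Fin F) (Fin G) ℝ),
        mixedOneInf Ψ ≤ η → Φ lams Ψs ≤ Φ lam Ψ) ∧
      ∃ νs : Fin F → ℝ,
        (∀ f, νs f = νj f * Real.exp (-(γ * u f) - γ * ζ * lams f)) ∧
        -- ν⋆ is the unique minimizer of the primal objective over the nonnegative orthant
        (∀ f, 0 ≤ νs f) ∧
        (∀ ν : Fin F → ℝ, (∀ f, 0 ≤ ν f) → P νs ≤ P ν) ∧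
        (∀ ν : Fin F → ℝ, (∀ f, 0 ≤ ν f) →
          (∀ ν' : Fin F → ℝ, (∀ f, 0 ≤ ν' f) → P ν ≤ P ν') → ν = νs) ∧
        -- M⋆ = diag(v⋆)(K ⊙ W⋆) attains the minimum defining S_c(ν⋆)
        ∃ Mst : Matrix (Fin F) (Fin G) ℝ,
          (∀ f g, Mst f g =
            Real.exp (lams f / ε) * (Real.exp (-(C f g) / ε) * Real.exp (Ψs f g / ε))) ∧
          (∀ f g, 0 ≤ Mst f g) ∧ (∀ f, ∑ g, Mst f g = νs f) ∧
          frob C Mst + ε * entD Mst + η * mixedInfOne Mst = Sc νs := by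
  classical
  have hFne : Nonempty (Fin F) := ⟨⟨0, hF⟩⟩
  have hGne : Nonempty (Fin G) := ⟨⟨0, hG⟩⟩
  -- reformulate the mixed (1,∞) norm constraint
  have hmix : ∀ Ψ : Matrix (Fin F) (Fin G) ℝ,
      mixedOneInf Ψ ≤ η ↔ (∀ g, ∑ f, |Ψ f g| ≤ η) := by
    intro Ψ
    constructor
    · intro h g
      rw [mixedOneInf] at h
      exact le_trans (le_ciSup (f := fun g => ∑ f, |Ψ f g|) (Finite.bddAbove_range _) g) h
    · intro h
      rw [mixedOneInf]
      exact ciSup_le h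
  obtain ⟨lams, Ψs, hΨsfeas, hdualmin⟩ :=
    exists_dual_min F G hF hG C u νj hνj γ ζ ε η hγ hζ hε hη Φ hΦ
  refine ⟨lams, Ψs, (hmix Ψs).mpr hΨsfeas,
    fun lam Ψ hΨ => hdualmin lam Ψ ((hmix Ψ).mp hΨ), ?_⟩
  obtain ⟨νs, hνsdef⟩ : ∃ νs : Fin F → ℝ,
      νs = fun f => νj f * Real.exp (-(γ * u f) - γ * ζ * lams f) := ⟨_, rfl⟩
  have hνsapp : ∀ f, νs f = νj f * Real.exp (-(γ * u f) - γ * ζ * lams f) := by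
    intro f; rw [hνsdef]
  have hνspos : ∀ f, 0 < νs f := by
    intro f; rw [hνsapp]; exact mul_pos (hνj f) (Real.exp_pos _)
  obtain ⟨Mst, hMstdef⟩ : ∃ Mst : Matrix (Fin F) (Fin G) ℝ,
      Mst = fun f g => Real.exp (lams f / ε)
        * (Real.exp (-(C f g) / ε) * Real.exp (Ψs f g / ε)) := ⟨_, rfl⟩
  have hMstapp : ∀ f g, Mst f g = Real.exp (lams f / ε)
      * (Real.exp (-(C f g) / ε) * Real.exp (Ψs f g / ε)) := by
    intro f g; rw [hMstdef]
  have hMstpos : ∀ f g, 0 < Mst f g := by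
    intro f g; rw [hMstapp]; positivity
  -- row sums of Mst
  have hrow : ∀ f, ∑ g, Mst f g = νs f := by
    intro f₀
    have hst := dual_stationarity F G C u νj γ ζ ε hγ hζ hε Φ hΦ lams Ψs
      (fun lam => hdualmin lam Ψs hΨsfeas) f₀
    rw [hνsapp, ← hst, Finset.sum_mul]
    exact Finset.sum_congr rfl fun g _ => by rw [hMstapp]; ring
  -- the column sup of Mst is attained
  have hsupMst : ∀ g, (⨆ f, |Mst f g|) = Mst (Classical.choose
      (Finite.exists_max fun f => Mst f g)) g := by
    intro g
    obtain hf₀ := Classical.choose_spec (Finite.exists_max fun f => Mst f g)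
    apply le_antisymm
    · apply ciSup_le
      intro f
      rw [abs_of_pos (hMstpos f g)]
      exact hf₀ f
    · calc Mst _ g = |Mst _ g| := (abs_of_pos (hMstpos _ g)).symm
        _ ≤ ⨆ f, |Mst f g| := le_ciSup (f := fun f => |Mst f g|) (Finite.bddAbove_range _) _
  set fmax : Fin G → Fin F := fun g => Classical.choose
    (Finite.exists_max fun f => Mst f g) with hfmaxdef
  have hfmax : ∀ g f, Mst f g ≤ Mst (fmax g) g := by
    intro g
    exact Classical.choose_spec (Finite.exists_max fun f => Mst f g)
  have hsup : ∀ g, (⨆ f, |Mst f g|) = Mst (fmax g) g := hsupMst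
  -- test matrix for complementary slackness
  obtain ⟨Ψh, hΨhdef⟩ : ∃ Ψh : Matrix (Fin F) (Fin G) ℝ,
      Ψh = fun f g => if f = fmax g then -η else 0 := ⟨_, rfl⟩
  have hΨhfeas : ∀ g, ∑ f, |Ψh f g| ≤ η := by
    intro g
    simp only [hΨhdef]
    have h1 : ∀ f, |if f = fmax g then -η else (0:ℝ)|
        = if f = fmax g then η else 0 := by
      intro f; split <;> simp [abs_of_pos hη]
    simp only [h1, Finset.sum_ite_eq' Finset.univ (fmax g) (fun _ => η),
      Finset.mem_univ, if_true]
    try exact le_refl _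
  have hVI := dual_VI F G C u νj γ ζ ε η hγ hζ hε hη Φ hΦ lams Ψs Ψh hΨsfeas hΨhfeas
    (fun Ψ h => hdualmin lams Ψ h)
  have hVI' : 0 ≤ ∑ f, ∑ g, Mst f g * (Ψh f g - Ψs f g) := by
    refine le_of_le_of_eq hVI (Finset.sum_congr rfl fun f _ =>
      Finset.sum_congr rfl fun g _ => ?_)
    rw [hMstapp]
  -- complementary slackness
  have hcs : ∑ f, ∑ g, Ψs f g * Mst f g = -(η * mixedInfOne Mst) := by
    have hub : ∑ f, ∑ g, Ψs f g * Mst f g ≤ -(η * mixedInfOne Mst) := by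
      have h1 : ∑ f, ∑ g, Mst f g * Ψs f g ≤ ∑ f, ∑ g, Mst f g * Ψh f g := by
        have := hVI'
        have hexp : ∑ f, ∑ g, Mst f g * (Ψh f g - Ψs f g)
            = (∑ f, ∑ g, Mst f g * Ψh f g) - ∑ f, ∑ g, Mst f g * Ψs f g := by
          rw [← Finset.sum_sub_distrib]
          refine Finset.sum_congr rfl fun f _ => ?_
          rw [← Finset.sum_sub_distrib]
          exact Finset.sum_congr rfl fun g _ => by ring
        rw [hexp] at this
        linarith
      have h2 : ∑ f, ∑ g, Mst f g * Ψh f g = -(η * mixedInfOne Mst) := by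
        rw [Finset.sum_comm, mixedInfOne, Finset.mul_sum, ← Finset.sum_neg_distrib]
        refine Finset.sum_congr rfl fun g _ => ?_
        rw [hsup g]
        simp only [hΨhdef]
        simp only [mul_ite, mul_neg, mul_zero]
        rw [Finset.sum_ite_eq' Finset.univ (fmax g) (fun f => -(Mst f g * η))]
        simp [mul_comm]
      calc ∑ f, ∑ g, Ψs f g * Mst f g = ∑ f, ∑ g, Mst f g * Ψs f g := by
            exact Finset.sum_congr rfl fun f _ => Finset.sum_congr rfl fun g _ => by ring
        _ ≤ ∑ f, ∑ g, Mst f g * Ψh f g := h1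
        _ = -(η * mixedInfOne Mst) := h2
    have hlb : -(η * mixedInfOne Mst) ≤ ∑ f, ∑ g, Ψs f g * Mst f g := by
      rw [Finset.sum_comm, mixedInfOne, Finset.mul_sum, ← Finset.sum_neg_distrib]
      refine Finset.sum_le_sum fun g _ => ?_
      rw [hsup g]
      have hcol : ∀ f, -(|Ψs f g| * Mst (fmax g) g) ≤ Ψs f g * Mst f g := by
        intro f
        have h1 : -(Ψs f g * Mst f g) ≤ |Ψs f g| * Mst f g := by
          calc -(Ψs f g * Mst f g) ≤ |Ψs f g * Mst f g| := neg_le_abs _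
            _ = |Ψs f g| * |Mst f g| := abs_mul _ _
            _ = |Ψs f g| * Mst f g := by rw [abs_of_pos (hMstpos f g)]
        have h2 : |Ψs f g| * Mst f g ≤ |Ψs f g| * Mst (fmax g) g :=
          mul_le_mul_of_nonneg_left (hfmax g f) (abs_nonneg _)
        linarith
      calc -(η * Mst (fmax g) g) ≤ -((∑ f, |Ψs f g|) * Mst (fmax g) g) := by
            have := mul_le_mul_of_nonneg_right (hΨsfeas g) (hMstpos (fmax g) g).le
            linarith
        _ = ∑ f, -(|Ψs f g| * Mst (fmax g) g) := by
            rw [Finset.sum_mul, ← Finset.sum_neg_distrib]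
        _ ≤ ∑ f, Ψs f g * Mst f g := Finset.sum_le_sum fun f _ => hcol f
    linarith
  -- pointwise log identity for Mst
  have hα : ∀ f g, C f g - Ψs f g - lams f = -(ε * Real.log (Mst f g)) := by
    intro f g
    rw [hMstapp, Real.log_mul (Real.exp_ne_zero _) (by positivity),
        Real.log_mul (Real.exp_ne_zero _) (Real.exp_ne_zero _),
        Real.log_exp, Real.log_exp, Real.log_exp]
    field_simp
    ring
  -- generic mixed-norm duality bound
  have hgeneric : ∀ M : Matrix (Fin F) (Fin G) ℝ, (∀ f g, 0 ≤ M f g) →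
      -(∑ f, ∑ g, Ψs f g * M f g) ≤ η * mixedInfOne M := by
    intro M hM
    have key : ∀ g, ∑ f, -(Ψs f g * M f g) ≤ η * (⨆ f', |M f' g|) := by
      intro g
      have hsupn : (0:ℝ) ≤ ⨆ f', |M f' g| :=
        le_trans (abs_nonneg _) (le_ciSup (f := fun f' => |M f' g|)
          (Finite.bddAbove_range _) (Classical.arbitrary _))
      calc ∑ f, -(Ψs f g * M f g) ≤ ∑ f, |Ψs f g| * (⨆ f', |M f' g|) := by
            refine Finset.sum_le_sum fun f _ => ?_
            calc -(Ψs f g * M f g) ≤ |Ψs f g * M f g| := neg_le_abs _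
              _ = |Ψs f g| * |M f g| := abs_mul _ _
              _ ≤ |Ψs f g| * (⨆ f', |M f' g|) := mul_le_mul_of_nonneg_left
                  (le_ciSup (f := fun f' => |M f' g|) (Finite.bddAbove_range _) f)
                  (abs_nonneg _)
        _ = (∑ f, |Ψs f g|) * (⨆ f', |M f' g|) := (Finset.sum_mul _ _ _).symm
        _ ≤ η * (⨆ f', |M f' g|) := mul_le_mul_of_nonneg_right (hΨsfeas g) hsupn
    calc -(∑ f, ∑ g, Ψs f g * M f g) = ∑ g, ∑ f, -(Ψs f g * M f g) := by
          rw [Finset.sum_comm, ← Finset.sum_neg_distrib]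
          exact Finset.sum_congr rfl fun g _ => by rw [Finset.sum_neg_distrib]
      _ ≤ ∑ g, η * (⨆ f', |M f' g|) := Finset.sum_le_sum fun g _ => key g
      _ = η * mixedInfOne M := by rw [mixedInfOne, Finset.mul_sum]
  -- sum splitting identity
  have hsum_split : ∀ (M : Matrix (Fin F) (Fin G) ℝ) (ν : Fin F → ℝ),
      (∀ f, ∑ g, M f g = ν f) →
      ∑ f, ∑ g, ((C f g - Ψs f g - lams f) * M f g
        + ε * (M f g * Real.log (M f g) - M f g + 1))
      = frob C M + ε * entD M - (∑ f, ∑ g, Ψs f g * M f g)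
        - (∑ f, lams f * ν f) := by
    intro M ν hrows
    have inner : ∀ f, ∑ g, ((C f g - Ψs f g - lams f) * M f g
        + ε * (M f g * Real.log (M f g) - M f g + 1))
        = (∑ g, C f g * M f g) + ε * (∑ g, (M f g * Real.log (M f g) - M f g + 1))
          - (∑ g, Ψs f g * M f g) - lams f * ν f := by
      intro f
      rw [← hrows f]
      simp only [Finset.mul_sum, ← Finset.sum_add_distrib, ← Finset.sum_sub_distrib]
      exact Finset.sum_congr rfl fun g _ => by ring
    calc ∑ f, ∑ g, ((C f g - Ψs f g - lams f) * M f g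
          + ε * (M f g * Real.log (M f g) - M f g + 1))
        = ∑ f, ((∑ g, C f g * M f g)
            + ε * (∑ g, (M f g * Real.log (M f g) - M f g + 1))
            - (∑ g, Ψs f g * M f g) - lams f * ν f) :=
          Finset.sum_congr rfl fun f _ => inner f
      _ = frob C M + ε * entD M - (∑ f, ∑ g, Ψs f g * M f g)
          - (∑ f, lams f * ν f) := by
          rw [frob, entD]
          simp only [Finset.mul_sum, ← Finset.sum_add_distrib, ← Finset.sum_sub_distrib]
          try exact Finset.sum_congr rfl fun f _ => by ring
  obtain ⟨K0, hK0⟩ : ∃ K0 : ℝ, K0 = ∑ f, ∑ g, ε * (1 - Mst f g) := ⟨_, rfl⟩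
  -- the fundamental lower bound
  have hlb : ∀ (ν : Fin F → ℝ) (M : Matrix (Fin F) (Fin G) ℝ), (∀ f g, 0 ≤ M f g) →
      (∀ f, ∑ g, M f g = ν f) →
      (∑ f, lams f * ν f) + K0 ≤ frob C M + ε * entD M + η * mixedInfOne M := by
    intro ν M hM hrows
    have h2 : ∀ f g, ε * (1 - Mst f g) ≤ (C f g - Ψs f g - lams f) * M f g
        + ε * (M f g * Real.log (M f g) - M f g + 1) := by
      intro f g
      rw [hα f g]
      exact entPoint_ge ε (M f g) (Mst f g) hε (hM f g) (hMstpos f g)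
    have h3 : K0 ≤ ∑ f, ∑ g, ((C f g - Ψs f g - lams f) * M f g
        + ε * (M f g * Real.log (M f g) - M f g + 1)) := by
      rw [hK0]
      exact Finset.sum_le_sum fun f _ => Finset.sum_le_sum fun g _ => h2 f g
    rw [hsum_split M ν hrows] at h3
    have h4 := hgeneric M hM
    linarith
  -- equality at Mst
  have heq : frob C Mst + ε * entD Mst + η * mixedInfOne Mst
      = (∑ f, lams f * νs f) + K0 := by
    have h3 : ∑ f, ∑ g, ((C f g - Ψs f g - lams f) * Mst f g
        + ε * (Mst f g * Real.log (Mst f g) - Mst f g + 1)) = K0 := by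
      rw [hK0]
      refine Finset.sum_congr rfl fun f _ => Finset.sum_congr rfl fun g _ => ?_
      rw [hα f g]
      ring
    rw [hsum_split Mst νs hrow] at h3
    linarith [hcs]
  have hMstmem : (frob C Mst + ε * entD Mst + η * mixedInfOne Mst)
      ∈ {y | ∃ M : Matrix (Fin F) (Fin G) ℝ, (∀ f g, 0 ≤ M f g) ∧
        (∀ f, ∑ g, M f g = νs f) ∧ y = frob C M + ε * entD M + η * mixedInfOne M} :=
    ⟨Mst, fun f g => (hMstpos f g).le, hrow, rfl⟩
  -- value of Sc at νs
  have hScνs : Sc νs = frob C Mst + ε * entD Mst + η * mixedInfOne Mst := by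
    rw [hSc]
    apply le_antisymm
    · refine csInf_le ⟨(∑ f, lams f * νs f) + K0, ?_⟩ hMstmem
      rintro y ⟨M, h1, h2, rfl⟩
      exact hlb νs M h1 h2
    · refine le_csInf ⟨_, hMstmem⟩ ?_
      rintro y ⟨M, h1, h2, rfl⟩
      rw [heq]
      exact hlb νs M h1 h2
  -- lower bound on Sc at arbitrary nonnegative ν
  have hScl : ∀ ν : Fin F → ℝ, (∀ f, 0 ≤ ν f) →
      (∑ f, lams f * ν f) + K0 ≤ Sc ν := by
    intro ν hν
    have hGne' : (G:ℝ) ≠ 0 := Nat.cast_ne_zero.mpr hG.ne'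
    rw [hSc]
    apply le_csInf
    · refine ⟨_, (fun f g => ν f / G), fun f g => div_nonneg (hν f) (Nat.cast_nonneg G),
        fun f => ?_, rfl⟩
      rw [Finset.sum_const, Finset.card_univ, Fintype.card_fin, nsmul_eq_mul]
      field_simp
    · rintro y ⟨M, h1, h2, rfl⟩
      exact hlb ν M h1 h2
  -- per-coordinate objective
  obtain ⟨Q, hQ⟩ : ∃ Q : Fin F → ℝ → ℝ, Q = fun f t =>
      γ * (u f * t) + (t * Real.log (t / νj f) + νj f - t)
        + γ * ζ * (lams f * t) := ⟨_, rfl⟩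
  have hident : ∀ f (t : ℝ), 0 ≤ t → Q f t
      = (νj f - νs f) + (t * Real.log t - t * Real.log (νs f) - t + νs f) := by
    intro f t ht
    have hlogνs : Real.log (νs f)
        = Real.log (νj f) + (-(γ * u f) - γ * ζ * lams f) := by
      rw [hνsapp, Real.log_mul (ne_of_gt (hνj f)) (Real.exp_ne_zero _), Real.log_exp]
    rw [hQ]
    dsimp only
    rcases eq_or_lt_of_le ht with h0 | ht'
    · rw [← h0]
      simp only [zero_mul, mul_zero, zero_div]
      ring
    · rw [Real.log_div (ne_of_gt ht') (ne_of_gt (hνj f)), hlogνs]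
      ring
  -- P in per-coordinate form
  have hPform : ∀ ν : Fin F → ℝ, P ν = (∑ f, Q f (ν f))
      + γ * ζ * (Sc ν - ∑ f, lams f * ν f) := by
    intro ν
    have hsplit : ∑ f, Q f (ν f) = γ * (∑ f, u f * ν f) + klDiv' ν νj
        + γ * ζ * (∑ f, lams f * ν f) := by
      rw [klDiv', hQ]
      simp only [Finset.mul_sum, ← Finset.sum_add_distrib]
      try exact Finset.sum_congr rfl fun f _ => by ring
    rw [hP, hsplit]
    ring
  -- value of P at νs
  have hPνs : P νs = (∑ f, (νj f - νs f)) + γ * ζ * K0 := by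
    rw [hPform νs]
    have h1 : Sc νs - ∑ f, lams f * νs f = K0 := by rw [hScνs, heq]; ring
    rw [h1]
    congr 1
    refine Finset.sum_congr rfl fun f _ => ?_
    rw [hident f (νs f) (hνspos f).le]
    ring
  -- minimality and strict minimality
  have hmain : ∀ ν : Fin F → ℝ, (∀ f, 0 ≤ ν f) →
      P νs ≤ P ν ∧ (ν ≠ νs → P νs < P ν) := by
    intro ν hν
    have hstep : ∀ f, (νj f - νs f) ≤ Q f (ν f) := by
      intro f
      rw [hident f (ν f) (hν f)]
      linarith [gibbs_ge (ν f) (νs f) (hν f) (hνspos f)]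
    have hSc1 := hScl ν hν
    have hK0' : γ * ζ * K0 ≤ γ * ζ * (Sc ν - ∑ f, lams f * ν f) :=
      mul_le_mul_of_nonneg_left (by linarith) (by positivity)
    constructor
    · rw [hPνs, hPform ν]
      have hsum1 : ∑ f, (νj f - νs f) ≤ ∑ f, Q f (ν f) :=
        Finset.sum_le_sum fun f _ => hstep f
      linarith
    · intro hne
      obtain ⟨f₀, hf₀⟩ := Function.ne_iff.mp hne
      have hstrictf : (νj f₀ - νs f₀) < Q f₀ (ν f₀) := by
        rw [hident f₀ (ν f₀) (hν f₀)]
        linarith [gibbs_gt (ν f₀) (νs f₀) (hν f₀) (hνspos f₀) hf₀]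
      have hsum1 : ∑ f, (νj f - νs f) < ∑ f, Q f (ν f) :=
        Finset.sum_lt_sum (fun f _ => hstep f) ⟨f₀, Finset.mem_univ _, hstrictf⟩
      rw [hPνs, hPform ν]
      linarith
  refine ⟨νs, hνsapp, fun f => (hνspos f).le, fun ν hν => (hmain ν hν).1, ?_,
    Mst, hMstapp, fun f g => (hMstpos f g).le, hrow, hScνs.symm⟩
  intro ν hν hminν
  by_contra hne
  have h1 := (hmain ν hν).2 hne
  have h2 := hminν νs fun f => (hνspos f).le
  linarith
end

section
/- Let ω ∈ ℝ and ω₀ > 0. Then ĉ(ω, ω₀/2) ≤ ĉ(ω, ω₀). Consequently, for every finite nonnegative Borel measure μ on [−π, π), ∫ ĉ(ω, ω₀/2) dμ(ω) ≤ ∫ ĉ(ω, ω₀) dμ(ω); that is, the unnormalized harmonic transport cost always prefers the sub-octave ω₀/2 over ω₀. -/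
open MeasureTheory

/-- Ground cost `ĉ(ω, ω₀) = inf_{k ∈ ℤ, k ≥ 1} (ω − k·ω₀)²`, with the positive
integers indexed by `k + 1`, `k : ℕ`. -/
noncomputable def chat (ω ω0 : ℝ) : ℝ := ⨅ k : ℕ, (ω - ((k : ℝ) + 1) * ω0) ^ 2

lemma chat_bddBelow (ω ω0 : ℝ) :
    BddBelow (Set.range fun k : ℕ => (ω - ((k : ℝ) + 1) * ω0) ^ 2) :=
  ⟨0, by rintro x ⟨k, rfl⟩; exact sq_nonneg _⟩

lemma chat_nonneg (ω ω0 : ℝ) : 0 ≤ chat ω ω0 :=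
  le_ciInf fun k => sq_nonneg _

lemma chat_halve (ω ω0 : ℝ) : chat ω (ω0 / 2) ≤ chat ω ω0 := by
  refine le_ciInf fun k => ?_
  have h := ciInf_le (chat_bddBelow ω (ω0 / 2)) (2 * k + 1)
  refine h.trans_eq ?_
  push_cast
  ring_nf

lemma chat_measurable (ω0 : ℝ) : Measurable fun ω => chat ω ω0 := by
  apply Measurable.iInf
  intro k
  fun_prop

lemma chat_le (ω ω0 : ℝ) : chat ω ω0 ≤ (ω - ω0) ^ 2 := by
  have h := ciInf_le (chat_bddBelow ω ω0) 0
  simpa [chat] using h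

lemma chat_integrable (ω0 : ℝ) (μ : Measure ℝ) [IsFiniteMeasure μ]
    (hμ : μ (Set.Ico (-Real.pi) Real.pi)ᶜ = 0) :
    Integrable (fun ω => chat ω ω0) μ := by
  refine Integrable.mono' (integrable_const ((Real.pi + |ω0|) ^ 2))
    (chat_measurable ω0).aestronglyMeasurable ?_
  have h : ∀ ω ∈ Set.Ico (-Real.pi) Real.pi, ‖chat ω ω0‖ ≤ (Real.pi + |ω0|) ^ 2 := by
    intro ω hω
    rw [Real.norm_eq_abs, abs_of_nonneg (chat_nonneg ω ω0)]
    refine (chat_le ω ω0).trans ?_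
    have h1 : |ω - ω0| ≤ Real.pi + |ω0| := by
      have : |ω| ≤ Real.pi := by
        rw [abs_le]; exact ⟨hω.1, hω.2.le⟩
      calc |ω - ω0| ≤ |ω| + |ω0| := abs_sub _ _
        _ ≤ Real.pi + |ω0| := by linarith
    calc (ω - ω0) ^ 2 = |ω - ω0| ^ 2 := (sq_abs _).symm
      _ ≤ (Real.pi + |ω0|) ^ 2 := by
          exact pow_le_pow_left₀ (abs_nonneg _) h1 2
  filter_upwards [measure_eq_zero_iff_ae_notMem.mp hμ] with ω hω
  exact h ω (by simpa using hω)

/-- the unnormalized harmonic ground cost always prefers the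
sub-octave: `ĉ(ω, ω₀/2) ≤ ĉ(ω, ω₀)` pointwise, and hence the corresponding
transport costs satisfy the same inequality for every finite nonnegative Borel
measure supported on `[−π, π)`. -/
theorem stmt13 (ω ω0 : ℝ) (hω0 : 0 < ω0) :
    chat ω (ω0 / 2) ≤ chat ω ω0 ∧
    ∀ μ : Measure ℝ, IsFiniteMeasure μ →
      μ (Set.Ico (-Real.pi) Real.pi)ᶜ = 0 →
      ∫ ω', chat ω' (ω0 / 2) ∂μ ≤ ∫ ω', chat ω' ω0 ∂μ := by
  refine ⟨chat_halve ω ω0, fun μ hfin hμ => ?_⟩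
  exact integral_mono_of_nonneg
    (Filter.Eventually.of_forall fun ω' => chat_nonneg ω' (ω0 / 2))
    (chat_integrable ω0 μ hμ)
    (Filter.Eventually.of_forall fun ω' => chat_halve ω' ω0)
end

section
/- Let ω₀ > 0, let k be a positive integer, and let Δ ∈ ℝ with 0 < |Δ| < ω₀/2. Then c(kω₀ + Δ, ω₀) < c(kω₀ + Δ, ω₀/2) if and only if |Δ| < ω₀/3. That is, for the normalized ground cost, an inharmonically perturbed harmonic kω₀ + Δ is assigned more cheaply to fundamental ω₀ than to the sub-octave ω₀/2 exactly when the deviation satisfies |Δ| < ω₀/3. -/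
/-- Normalized ground cost `c(ω, ω₀) = ĉ(ω, ω₀)/ω₀²`. -/
noncomputable def cnorm (ω ω0 : ℝ) : ℝ := chat ω ω0 / ω0 ^ 2

lemma chat_eq (ω ω0 : ℝ) (hω0 : 0 < ω0) (n : ℕ) (hn : 1 ≤ n)
    (h : |ω - (n : ℝ) * ω0| ≤ ω0 / 2) : chat ω ω0 = (ω - (n : ℝ) * ω0) ^ 2 := by
  have hbdd : BddBelow (Set.range fun k : ℕ => (ω - ((k : ℝ) + 1) * ω0) ^ 2) := by
    refine ⟨0, ?_⟩
    rintro _ ⟨k, rfl⟩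
    positivity
  have habs := abs_le.mp h
  apply le_antisymm
  · have hle := ciInf_le hbdd (n - 1)
    have hcast : ((n - 1 : ℕ) : ℝ) + 1 = (n : ℝ) := by
      have : (1 : ℕ) ≤ n := hn
      push_cast [Nat.cast_sub this]
      ring
    rw [chat]
    simpa [hcast] using hle
  · rw [chat]
    apply le_ciInf
    intro m
    set d : ℤ := (n : ℤ) - ((m : ℤ) + 1) with hd
    have he : ω - ((m : ℝ) + 1) * ω0 = (ω - (n : ℝ) * ω0) + (d : ℝ) * ω0 := by
      push_cast [hd]; ring
    rcases eq_or_ne d 0 with h0 | h0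
    · rw [he, h0]; push_cast; ring_nf; exact le_rfl
    · have h1 : (1 : ℤ) ≤ |d| := Int.one_le_abs h0
      rcases abs_cases d with ⟨ha, _⟩ | ⟨ha, _⟩
      · have hd1 : (1 : ℝ) ≤ (d : ℝ) := by exact_mod_cast ha ▸ h1
        have hA : ω0 ≤ (d : ℝ) * ω0 := by nlinarith
        have hB : 0 ≤ 2 * (ω - (n : ℝ) * ω0) + (d : ℝ) * ω0 := by linarith [habs.1]
        rw [he]
        nlinarith [mul_nonneg (le_trans hω0.le hA) hB]
      · have hd1 : (d : ℝ) ≤ -1 := by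
          have : d ≤ -1 := by omega
          exact_mod_cast this
        have hA : (d : ℝ) * ω0 ≤ -ω0 := by nlinarith
        have hB : 2 * (ω - (n : ℝ) * ω0) + (d : ℝ) * ω0 ≤ 0 := by linarith [habs.2]
        rw [he]
        nlinarith [mul_nonneg (neg_nonneg.2 (by linarith : (d : ℝ) * ω0 ≤ 0)) (neg_nonneg.2 hB)]

/-- for the normalized ground cost, an inharmonically perturbed
harmonic `kω₀ + Δ` (with `0 < |Δ| < ω₀/2`) is assigned more cheaply to the
fundamental `ω₀` than to the sub-octave `ω₀/2` iff `|Δ| < ω₀/3`. -/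
theorem stmt14 (ω0 : ℝ) (hω0 : 0 < ω0) (k : ℕ) (hk : 1 ≤ k) (Δ : ℝ)
    (hΔpos : 0 < |Δ|) (hΔ : |Δ| < ω0 / 2) :
    cnorm ((k : ℝ) * ω0 + Δ) ω0 < cnorm ((k : ℝ) * ω0 + Δ) (ω0 / 2) ↔
      |Δ| < ω0 / 3 := by
  have hΔne : Δ ≠ 0 := abs_pos.mp hΔpos
  have hΔ2 : 0 < Δ ^ 2 := by positivity
  have habs := abs_lt.mp hΔ
  have hf : chat ((k : ℝ) * ω0 + Δ) ω0 = Δ ^ 2 := by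
    rw [chat_eq _ _ hω0 k hk (by rw [show (k : ℝ) * ω0 + Δ - (k : ℝ) * ω0 = Δ by ring]; linarith [hΔ.le])]
    ring
  rw [cnorm, cnorm, hf]
  have hω02 : 0 < ω0 ^ 2 := by positivity
  have hω0q : 0 < (ω0 / 2) ^ 2 := by positivity
  rcases le_or_gt |Δ| (ω0 / 4) with h4 | h4
  · have hs : chat ((k : ℝ) * ω0 + Δ) (ω0 / 2) = Δ ^ 2 := by
      have h2k : 1 ≤ 2 * k := by omega
      rw [chat_eq _ _ (by linarith) (2 * k) h2k
        (by push_cast; rw [show (k : ℝ) * ω0 + Δ - 2 * (k : ℝ) * (ω0 / 2) = Δ by ring]; linarith)]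
      push_cast; ring
    rw [hs]
    constructor
    · intro _; linarith
    · intro _
      rw [div_lt_div_iff₀ hω02 hω0q]
      nlinarith
  · rcases hΔne.lt_or_gt with hneg | hpos
    · -- Δ < 0, use n = 2k - 1, δ = Δ + ω0/2
      have haΔ : |Δ| = -Δ := abs_of_neg hneg
      rw [haΔ] at h4 hΔ ⊢
      have hs : chat ((k : ℝ) * ω0 + Δ) (ω0 / 2) = (Δ + ω0 / 2) ^ 2 := by
        have h2k : 1 ≤ 2 * k - 1 := by omega
        rw [chat_eq _ _ (by linarith) (2 * k - 1) h2k ?_]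
        · push_cast [Nat.cast_sub (by omega : 1 ≤ 2 * k)]; ring_nf
        · push_cast [Nat.cast_sub (by omega : 1 ≤ 2 * k)]
          rw [show (k : ℝ) * ω0 + Δ - (2 * (k : ℝ) - 1) * (ω0 / 2) = Δ + ω0 / 2 by ring]
          rw [abs_le]; constructor <;> linarith
      rw [hs, div_lt_div_iff₀ hω02 hω0q,
        show Δ ^ 2 * (ω0 / 2) ^ 2 = (Δ * (ω0 / 2)) ^ 2 by ring,
        show (Δ + ω0 / 2) ^ 2 * ω0 ^ 2 = ((Δ + ω0 / 2) * ω0) ^ 2 by ring, sq_lt_sq,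
        abs_mul, abs_mul, abs_of_pos (by linarith : (0:ℝ) < ω0 / 2), abs_of_pos hω0,
        haΔ, abs_of_pos (by linarith : (0:ℝ) < Δ + ω0 / 2),
        show -Δ * (ω0 / 2) = -Δ / 2 * ω0 by ring, mul_lt_mul_iff_of_pos_right hω0]
      constructor <;> intro <;> linarith
    · -- Δ > 0, use n = 2k + 1, δ = Δ - ω0/2
      have haΔ : |Δ| = Δ := abs_of_pos hpos
      rw [haΔ] at h4 hΔ ⊢
      have hs : chat ((k : ℝ) * ω0 + Δ) (ω0 / 2) = (Δ - ω0 / 2) ^ 2 := by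
        have h2k : 1 ≤ 2 * k + 1 := by omega
        rw [chat_eq _ _ (by linarith) (2 * k + 1) h2k ?_]
        · push_cast; ring_nf
        · push_cast
          rw [show (k : ℝ) * ω0 + Δ - (2 * (k : ℝ) + 1) * (ω0 / 2) = Δ - ω0 / 2 by ring]
          rw [abs_le]; constructor <;> linarith
      rw [hs, div_lt_div_iff₀ hω02 hω0q,
        show Δ ^ 2 * (ω0 / 2) ^ 2 = (Δ * (ω0 / 2)) ^ 2 by ring,
        show (Δ - ω0 / 2) ^ 2 * ω0 ^ 2 = ((Δ - ω0 / 2) * ω0) ^ 2 by ring, sq_lt_sq,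
        abs_mul, abs_mul, abs_of_pos (by linarith : (0:ℝ) < ω0 / 2), abs_of_pos hω0,
        haΔ, abs_of_neg (by linarith : Δ - ω0 / 2 < 0),
        show Δ * (ω0 / 2) = Δ / 2 * ω0 by ring, mul_lt_mul_iff_of_pos_right hω0]
      constructor <;> intro <;> linarith
end

section
/- Let F, G be positive integers, let C ∈ ℝ^{F×G} have nonnegative entries, and let ε ≥ 0, η ≥ 0. Define S : ℂ^F → ℝ by S(x) = inf{ ⟨C, M⟩ + ε·D(M) + η·‖M‖_{∞,1} : M ∈ ℝ^{F×G}, M ≥ 0, (M·1_G)_f ≥ |x_f| for all f }. Then S is a convex function on ℂ^F (viewed as a real vector space): for all x, y ∈ ℂ^F and t ∈ [0, 1], S(t·x + (1−t)·y) ≤ t·S(x) + (1−t)·S(y). -/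
open scoped BigOperators

lemma ent1_nonneg (a : ℝ) (ha : 0 ≤ a) : 0 ≤ a * Real.log a - a + 1 := by
  rcases eq_or_lt_of_le ha with h | h
  · simp [← h]
  · have hlog := Real.log_le_sub_one_of_pos (inv_pos.mpr h)
    rw [Real.log_inv] at hlog
    have h2 := mul_le_mul_of_nonneg_left hlog h.le
    have h3 : a * a⁻¹ = 1 := mul_inv_cancel₀ h.ne'
    nlinarith

lemma mul_csInf_ge {A : Set ℝ} (hne : A.Nonempty) (hbd : BddBelow A) (t c : ℝ)
    (ht : 0 ≤ t) (h : ∀ a ∈ A, c ≤ t * a) : c ≤ t * sInf A := by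
  rcases eq_or_lt_of_le ht with h0 | h0
  · obtain ⟨a, ha⟩ := hne
    have := h a ha
    simp only [← h0, zero_mul] at this ⊢
    exact this
  · have h1 : c / t ≤ sInf A :=
      le_csInf hne fun a ha => (div_le_iff₀' h0).mpr (h a ha)
    calc c = t * (c / t) := by field_simp
    _ ≤ t * sInf A := mul_le_mul_of_nonneg_left h1 ht

/-- the transport-based regularizer with the relaxed marginal
inequality constraint `M·1_G ≥ |x|` is convex in the complex amplitude
vector `x`. -/
theorem stmt19 (F G : ℕ) (hF : 0 < F) (hG : 0 < G)
    (C : Matrix (Fin F) (Fin G) ℝ) (hC : ∀ f g, 0 ≤ C f g)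
    (ε η : ℝ) (hε : 0 ≤ ε) (hη : 0 ≤ η)
    (S : (Fin F → ℂ) → ℝ)
    (hS : ∀ x : Fin F → ℂ, S x = sInf {y : ℝ | ∃ M : Matrix (Fin F) (Fin G) ℝ,
      (∀ f g, 0 ≤ M f g) ∧ (∀ f, ‖x f‖ ≤ ∑ g, M f g) ∧
      y = frob C M + ε * entD M + η * mixedInfOne M}) :
    ∀ x y : Fin F → ℂ, ∀ t : ℝ, 0 ≤ t → t ≤ 1 →
      S (t • x + (1 - t) • y) ≤ t * S x + (1 - t) * S y := by
  haveI : Nonempty (Fin F) := Fin.pos_iff_nonempty.mp hF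
  set Aset : (Fin F → ℂ) → Set ℝ := fun x =>
    {y : ℝ | ∃ M : Matrix (Fin F) (Fin G) ℝ,
      (∀ f g, 0 ≤ M f g) ∧ (∀ f, ‖x f‖ ≤ ∑ g, M f g) ∧
      y = frob C M + ε * entD M + η * mixedInfOne M} with hAset
  -- nonemptiness
  have hne : ∀ z : Fin F → ℂ, (Aset z).Nonempty := by
    intro z
    refine ⟨_, (fun f g => ‖z f‖), fun f g => norm_nonneg _, ?_, rfl⟩
    intro f
    rw [Finset.sum_const, Finset.card_univ, Fintype.card_fin, nsmul_eq_mul]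
    exact le_mul_of_one_le_left (norm_nonneg _) (by exact_mod_cast hG)
  -- bounded below by 0
  have hbd : ∀ z : Fin F → ℂ, BddBelow (Aset z) := by
    intro z
    refine ⟨0, fun v hv => ?_⟩
    obtain ⟨M, hM0, _, rfl⟩ := hv
    have hfro : 0 ≤ frob C M :=
      Finset.sum_nonneg fun f _ => Finset.sum_nonneg fun g _ =>
        mul_nonneg (hC f g) (hM0 f g)
    have hent : 0 ≤ entD M :=
      Finset.sum_nonneg fun f _ => Finset.sum_nonneg fun g _ =>
        ent1_nonneg _ (hM0 f g)
    have hmix : 0 ≤ mixedInfOne M := by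
      refine Finset.sum_nonneg fun g _ => ?_
      obtain ⟨f0⟩ : Nonempty (Fin F) := inferInstance
      exact (abs_nonneg (M f0 g)).trans
        (le_ciSup (Set.Finite.bddAbove (Set.finite_range (fun f => |M f g|))) f0)
    positivity
  intro x y t ht0 ht1
  set z := t • x + (1 - t) • y with hz
  set s := 1 - t with hs
  have hs0 : 0 ≤ s := by simp [hs]; linarith
  have hts : t + s = 1 := by simp [hs]
  -- key pointwise bound
  have key : ∀ a ∈ Aset x, ∀ b ∈ Aset y, S z ≤ t * a + s * b := by
    rintro a ⟨M, hM0, hMc, rfl⟩ b ⟨N, hN0, hNc, rfl⟩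
    set P : Matrix (Fin F) (Fin G) ℝ := fun f g => t * M f g + s * N f g with hP
    have hP0 : ∀ f g, 0 ≤ P f g := fun f g =>
      add_nonneg (mul_nonneg ht0 (hM0 f g)) (mul_nonneg hs0 (hN0 f g))
    have hPc : ∀ f, ‖z f‖ ≤ ∑ g, P f g := by
      intro f
      have h1 : ‖z f‖ ≤ t * ‖x f‖ + s * ‖y f‖ := by
        have : z f = (t : ℂ) * x f + (s : ℂ) * y f := by
          simp [hz, hs, Complex.real_smul]
        rw [this]
        calc ‖(t : ℂ) * x f + (s : ℂ) * y f‖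
            ≤ ‖(t : ℂ) * x f‖ + ‖(s : ℂ) * y f‖ :=
              norm_add_le _ _
          _ = t * ‖x f‖ + s * ‖y f‖ := by
              rw [norm_mul, norm_mul, Complex.norm_real, Complex.norm_real, Real.norm_eq_abs, Real.norm_eq_abs,
                abs_of_nonneg ht0, abs_of_nonneg hs0]
      calc ‖z f‖ ≤ t * ‖x f‖ + s * ‖y f‖ := h1
        _ ≤ t * ∑ g, M f g + s * ∑ g, N f g := by
            have := mul_le_mul_of_nonneg_left (hMc f) ht0
            have := mul_le_mul_of_nonneg_left (hNc f) hs0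
            linarith
        _ = ∑ g, P f g := by
            rw [Finset.mul_sum, Finset.mul_sum, ← Finset.sum_add_distrib]
    have hfro : frob C P = t * frob C M + s * frob C N := by
      simp only [frob, Finset.mul_sum, ← Finset.sum_add_distrib]
      exact Finset.sum_congr rfl fun f _ => Finset.sum_congr rfl fun g _ => by
        simp only [hP]; ring
    have hent : entD P ≤ t * entD M + s * entD N := by
      simp only [entD, Finset.mul_sum, ← Finset.sum_add_distrib]
      refine Finset.sum_le_sum fun f _ => Finset.sum_le_sum fun g _ => ?_
      have hcv := Real.convexOn_mul_log.2 (Set.mem_Ici.mpr (hM0 f g))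
        (Set.mem_Ici.mpr (hN0 f g)) ht0 hs0 hts
      simp only [smul_eq_mul] at hcv
      simp only [hP]
      nlinarith
    have hmix : mixedInfOne P ≤ t * mixedInfOne M + s * mixedInfOne N := by
      simp only [mixedInfOne, Finset.mul_sum, ← Finset.sum_add_distrib]
      refine Finset.sum_le_sum fun g _ => ?_
      refine ciSup_le fun f => ?_
      have h1 : |P f g| ≤ t * |M f g| + s * |N f g| := by
        calc |P f g| ≤ |t * M f g| + |s * N f g| := abs_add_le _ _
          _ = t * |M f g| + s * |N f g| := by
              rw [abs_mul, abs_mul, abs_of_nonneg ht0, abs_of_nonneg hs0]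
      have h2 : |M f g| ≤ ⨆ f', |M f' g| :=
        le_ciSup (Set.Finite.bddAbove (Set.finite_range (fun f' => |M f' g|))) f
      have h3 : |N f g| ≤ ⨆ f', |N f' g| :=
        le_ciSup (Set.Finite.bddAbove (Set.finite_range (fun f' => |N f' g|))) f
      have := mul_le_mul_of_nonneg_left h2 ht0
      have := mul_le_mul_of_nonneg_left h3 hs0
      linarith
    have hmem : frob C P + ε * entD P + η * mixedInfOne P ∈ Aset z := ⟨P, hP0, hPc, rfl⟩
    have hle : S z ≤ frob C P + ε * entD P + η * mixedInfOne P := by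
      rw [hS z]; exact csInf_le (hbd z) hmem
    have h4 := mul_le_mul_of_nonneg_left hent hε
    have h5 := mul_le_mul_of_nonneg_left hmix hη
    calc S z ≤ frob C P + ε * entD P + η * mixedInfOne P := hle
      _ ≤ t * (frob C M + ε * entD M + η * mixedInfOne M)
          + s * (frob C N + ε * entD N + η * mixedInfOne N) := by
          rw [hfro]; ring_nf; ring_nf at h4 h5 ⊢; nlinarith
  -- combine infima
  have step1 : ∀ b ∈ Aset y, S z - s * b ≤ t * sInf (Aset x) := by
    intro b hb
    exact mul_csInf_ge (hne x) (hbd x) t _ ht0 fun a ha => by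
      have := key a ha b hb; linarith
  have step2 : S z - t * sInf (Aset x) ≤ s * sInf (Aset y) := by
    exact mul_csInf_ge (hne y) (hbd y) s _ hs0 fun b hb => by
      have := step1 b hb; linarith
  rw [hS x, hS y] at *
  linarith
end
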